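/- arXiv:2411.01364 — 6 statements merged into one kernel-verified Lean document; each statement's English description precedes it below -/
import Mathlib

section
/- Any two probability measures μ₁, μ₂ on ℝ with finite second moments have a least upper bound with respect to the stochastic order: there exists ν ∈ 𝒫₂(ℝ) with μ₁ ≤_st ν, μ₂ ≤_st ν, and ν ≤_st ρ for any ρ that is an upper bound of both μ₁ and μ₂. The measure ν is the one whose cumulative distribution function is min(F_{μ₁}, F_{μ₂}). -/
open MeasureTheory Filter Set Topology

noncomputable section

/-- The stochastic order on measures on ℝ: `μ ≤_st ν` iff `∫ f dμ ≤ ∫ f dν`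
for every bounded increasing function `f : ℝ → ℝ`. -/
def StOrder (μ ν : Measure ℝ) : Prop :=
  ∀ f : ℝ → ℝ, Monotone f → (∃ C : ℝ, ∀ x, |f x| ≤ C) →
    ∫ x, f x ∂μ ≤ ∫ x, f x ∂ν

/-- `𝒫₂(ℝ)`: probability measures on ℝ with finite second moment. -/
def P2 : Set (Measure ℝ) :=
  {μ | IsProbabilityMeasure μ ∧ Integrable (fun x : ℝ => x ^ 2) μ}

/-- Classification of lower sets in ℝ. -/
lemma isLowerSet_classify (D : Set ℝ) (hD : IsLowerSet D) :
    D = ∅ ∨ D = univ ∨ (∃ q, D = Iic q) ∨ (∃ q, D = Iio q) := by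
  rcases eq_empty_or_nonempty D with h | hne
  · exact Or.inl h
  by_cases hb : BddAbove D
  · set q := sSup D with hq
    by_cases hqD : q ∈ D
    · refine Or.inr (Or.inr (Or.inl ⟨q, ?_⟩))
      ext x
      exact ⟨fun hx => le_csSup hb hx, fun hx => hD hx hqD⟩
    · refine Or.inr (Or.inr (Or.inr ⟨q, ?_⟩))
      ext x
      constructor
      · intro hx
        refine lt_of_le_of_ne (le_csSup hb hx) fun heq => hqD ?_
        rw [hq, ← heq]; exact hx
      · intro hx
        obtain ⟨y, hyD, hxy⟩ := exists_lt_of_lt_csSup hne hx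
        exact hD hxy.le hyD
  · refine Or.inr (Or.inl ?_)
    ext x
    simp only [mem_univ, iff_true]
    obtain ⟨y, hyD, hxy⟩ := not_bddAbove_iff.mp hb x
    exact hD hxy.le hyD

lemma Iio_eq_iUnion_Iic (q : ℝ) : Iio q = ⋃ n : ℕ, Iic (q - ((n : ℝ) + 1)⁻¹) := by
  ext x
  simp only [mem_Iio, mem_iUnion, mem_Iic]
  constructor
  · intro hx
    obtain ⟨n, hn⟩ := exists_nat_one_div_lt (sub_pos.mpr hx)
    exact ⟨n, by rw [one_div] at hn; linarith⟩
  · intro ⟨n, hn⟩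
    have : (0:ℝ) < ((n : ℝ) + 1)⁻¹ := by positivity
    linarith

lemma meas_Iio_mono {μ ν : Measure ℝ}
    (h : ∀ x, ν (Iic x) ≤ μ (Iic x)) (q : ℝ) : ν (Iio q) ≤ μ (Iio q) := by
  rw [Iio_eq_iUnion_Iic q]
  have hdir : Directed (· ⊆ ·) (fun n : ℕ => Iic (q - ((n : ℝ) + 1)⁻¹)) := by
    apply Monotone.directed_le
    intro n m hnm
    apply Iic_subset_Iic.mpr
    have : ((m : ℝ) + 1)⁻¹ ≤ ((n : ℝ) + 1)⁻¹ := by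
      apply inv_anti₀ (by positivity) (by exact_mod_cast by linarith)
    linarith
  rw [hdir.measure_iUnion]
  refine iSup_le fun n => (h _).trans (measure_mono ?_)
  rw [← Iio_eq_iUnion_Iic q]
  apply Iic_subset_Iio.mpr
  have : (0:ℝ) < ((n : ℝ) + 1)⁻¹ := by positivity
  linarith

/-- If the CDF of ν is below the CDF of μ, then μ gives smaller mass to upper sets. -/
lemma meas_upper_le (μ ν : Measure ℝ) [IsProbabilityMeasure μ] [IsProbabilityMeasure ν]
    (h : ∀ x, ν (Iic x) ≤ μ (Iic x)) (U : Set ℝ) (hU : IsUpperSet U) : μ U ≤ ν U := by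
  rcases isLowerSet_classify Uᶜ hU.compl with hc | hc | ⟨q, hc⟩ | ⟨q, hc⟩
  · have : U = univ := by simpa using congrArg compl hc
    simp [this]
  · have : U = ∅ := by simpa using congrArg compl hc
    simp [this]
  · have hUeq : U = Ioi q := by
      have := congrArg compl hc
      simpa [compl_Iic] using this
    rw [hUeq, ← compl_Iic, prob_compl_eq_one_sub measurableSet_Iic,
      prob_compl_eq_one_sub measurableSet_Iic]
    exact tsub_le_tsub_left (h q) 1
  · have hUeq : U = Ici q := by
      have := congrArg compl hc
      simpa [compl_Iio] using this
    rw [hUeq, ← compl_Iio, prob_compl_eq_one_sub measurableSet_Iio,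
      prob_compl_eq_one_sub measurableSet_Iio]
    exact tsub_le_tsub_left (meas_Iio_mono h q) 1

lemma integrable_of_bdd {f : ℝ → ℝ} {μ : Measure ℝ} [IsProbabilityMeasure μ]
    (hm : Measurable f) (C : ℝ) (hC : ∀ x, |f x| ≤ C) : Integrable f μ :=
  Integrable.mono' (integrable_const C) hm.aestronglyMeasurable
    (ae_of_all _ fun x => by rw [Real.norm_eq_abs]; exact hC x)

/-- Core lemma: domination of CDFs implies stochastic order. -/
lemma stOrder_of_cdf_le (μ ν : Measure ℝ) [IsProbabilityMeasure μ] [IsProbabilityMeasure ν]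
    (h : ∀ x, ν (Iic x) ≤ μ (Iic x)) : StOrder μ ν := by
  rintro f hf ⟨C, hC⟩
  have hC0 : 0 ≤ C := (abs_nonneg _).trans (hC 0)
  set g : ℝ → ℝ := fun x => f x + C with hg
  have hgmono : Monotone g := fun a b hab => by simp only [hg]; linarith [hf hab]
  have hg0 : ∀ x, 0 ≤ g x := fun x => by
    have := (abs_le.mp (hC x)).1; simp only [hg]; linarith
  have hgb : ∀ x, g x ≤ 2 * C := fun x => by
    have := (abs_le.mp (hC x)).2; simp only [hg]; linarith
  have hgm : Measurable g := hgmono.measurable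
  have key : ∫⁻ x, ENNReal.ofReal (g x) ∂μ ≤ ∫⁻ x, ENNReal.ofReal (g x) ∂ν := by
    rw [lintegral_eq_lintegral_meas_le μ (ae_of_all _ hg0) hgm.aemeasurable,
        lintegral_eq_lintegral_meas_le ν (ae_of_all _ hg0) hgm.aemeasurable]
    refine lintegral_mono fun t => ?_
    exact meas_upper_le μ ν h _ (fun a b hab ha => le_trans ha (hgmono hab))
  have hfm : Measurable f := hf.measurable
  have hνfin : ∫⁻ x, ENNReal.ofReal (g x) ∂ν ≠ ⊤ := by
    refine ne_top_of_le_ne_top ?_ (lintegral_mono fun x =>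
      ENNReal.ofReal_le_ofReal (hgb x))
    simp [lintegral_const]
    exact ENNReal.mul_ne_top (by norm_num) ENNReal.ofReal_ne_top
  have hgint : ∀ (κ : Measure ℝ) [IsProbabilityMeasure κ],
      ∫ x, g x ∂κ = (∫⁻ x, ENNReal.ofReal (g x) ∂κ).toReal := fun κ _ =>
    integral_eq_lintegral_of_nonneg_ae (ae_of_all _ hg0) hgm.aestronglyMeasurable
  have hfgi : ∀ (κ : Measure ℝ) [IsProbabilityMeasure κ],
      ∫ x, g x ∂κ = ∫ x, f x ∂κ + C := by
    intro κ _
    rw [integral_add (integrable_of_bdd hfm C hC) (integrable_const C)]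
    simp
  have hle : ∫ x, g x ∂μ ≤ ∫ x, g x ∂ν := by
    rw [hgint μ, hgint ν]
    exact ENNReal.toReal_mono hνfin key
  rw [hfgi μ, hfgi ν] at hle
  linarith

/-- Converse: stochastic order implies CDF domination. -/
lemma cdf_le_of_stOrder (μ ρ : Measure ℝ) [IsProbabilityMeasure μ] [IsProbabilityMeasure ρ]
    (h : StOrder μ ρ) (x : ℝ) : ρ (Iic x) ≤ μ (Iic x) := by
  set f : ℕ → ℝ → ℝ := fun n y => min 1 (max 0 (((n : ℝ) + 1) * (y - x))) with hf
  have hmono : ∀ n, Monotone (f n) := by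
    intro n a b hab
    refine min_le_min le_rfl (max_le_max le_rfl ?_)
    have : (0:ℝ) ≤ (n : ℝ) + 1 := by positivity
    nlinarith
  have hbd : ∀ n y, |f n y| ≤ 1 := by
    intro n y
    rw [abs_le]
    constructor
    · have : (0:ℝ) ≤ f n y := le_min zero_le_one (le_max_left _ _) |>.trans_eq rfl
      linarith [le_min zero_le_one (le_max_left 0 (((n : ℝ) + 1) * (y - x)))]
    · exact min_le_left _ _
  have hint : ∀ n, ∫ y, f n y ∂μ ≤ ∫ y, f n y ∂ρ := fun n =>
    h (f n) (hmono n) ⟨1, hbd n⟩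
  have hlim : ∀ y, Tendsto (fun n => f n y) atTop
      (𝓝 (Set.indicator (Ioi x) (fun _ => (1:ℝ)) y)) := by
    intro y
    by_cases hy : x < y
    · rw [indicator_of_mem (mem_Ioi.mpr hy)]
      refine tendsto_atTop_of_eventually_const (i₀ := Nat.ceil ((y - x)⁻¹)) fun n hn => ?_
      have hyx : (0:ℝ) < y - x := sub_pos.mpr hy
      have h1 : (1:ℝ) ≤ ((n : ℝ) + 1) * (y - x) := by
        have : (y - x)⁻¹ ≤ (n : ℝ) + 1 := by
          calc (y - x)⁻¹ ≤ (Nat.ceil ((y - x)⁻¹) : ℝ) := Nat.le_ceil _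
          _ ≤ (n : ℝ) := by exact_mod_cast hn
          _ ≤ (n : ℝ) + 1 := by linarith
        calc (1:ℝ) = (y - x)⁻¹ * (y - x) := (inv_mul_cancel₀ hyx.ne').symm
        _ ≤ ((n : ℝ) + 1) * (y - x) := mul_le_mul_of_nonneg_right this hyx.le
      simp only [hf]
      rw [max_eq_right (by linarith), min_eq_left h1]
    · rw [indicator_of_notMem (by simpa using hy)]
      have : ∀ n, f n y = 0 := by
        intro n
        have hyx : y - x ≤ 0 := by simp at hy; linarith
        have : ((n : ℝ) + 1) * (y - x) ≤ 0 :=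
          mul_nonpos_of_nonneg_of_nonpos (by positivity) hyx
        simp only [hf]
        rw [max_eq_left this, min_eq_right zero_le_one]
      simp only [this]
      exact tendsto_const_nhds
  have hmeas : ∀ n, Measurable (f n) := fun n => (hmono n).measurable
  have htend : ∀ (κ : Measure ℝ) [IsProbabilityMeasure κ],
      Tendsto (fun n => ∫ y, f n y ∂κ) atTop (𝓝 ((κ (Ioi x)).toReal)) := by
    intro κ _
    have := tendsto_integral_of_dominated_convergence (μ := κ)
      (bound := fun _ => (1:ℝ))
      (F := fun n => f n) (f := Set.indicator (Ioi x) (fun _ => (1:ℝ)))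
      (fun n => (hmeas n).aestronglyMeasurable)
      (integrable_const 1)
      (fun n => ae_of_all _ fun y => by rw [Real.norm_eq_abs]; exact hbd n y)
      (ae_of_all _ hlim)
    rwa [integral_indicator_const (1:ℝ) measurableSet_Ioi, smul_eq_mul, mul_one] at this
  have hreal : (μ (Ioi x)).toReal ≤ (ρ (Ioi x)).toReal :=
    le_of_tendsto_of_tendsto' (htend μ) (htend ρ) hint
  have hIoi : μ (Ioi x) ≤ ρ (Ioi x) :=
    (ENNReal.toReal_le_toReal (measure_ne_top μ _) (measure_ne_top ρ _)).mp hreal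
  rw [← compl_Ioi, prob_compl_eq_one_sub measurableSet_Ioi,
    prob_compl_eq_one_sub measurableSet_Ioi]
  exact tsub_le_tsub_left hIoi 1

lemma Ici_eq_iInter_Ioi (q : ℝ) : Ici q = ⋂ n : ℕ, Ioi (q - ((n : ℝ) + 1)⁻¹) := by
  ext y
  simp only [mem_Ici, mem_iInter, mem_Ioi]
  constructor
  · intro hy n
    have : (0:ℝ) < ((n : ℝ) + 1)⁻¹ := by positivity
    linarith
  · intro hy
    by_contra hlt
    push_neg at hlt
    obtain ⟨n, hn⟩ := exists_nat_one_div_lt (sub_pos.mpr hlt)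
    rw [one_div] at hn
    have := hy n
    linarith

/-- Any two measures in `𝒫₂(ℝ)` have a least upper bound for the
stochastic order, namely the measure whose CDF is `min (F_{μ₁}, F_{μ₂})`. -/
theorem stochastic_order_lub (μ₁ μ₂ : Measure ℝ) (h₁ : μ₁ ∈ P2) (h₂ : μ₂ ∈ P2) :
    ∃ ν ∈ P2, (∀ x : ℝ, ν (Set.Iic x) = min (μ₁ (Set.Iic x)) (μ₂ (Set.Iic x))) ∧
      StOrder μ₁ ν ∧ StOrder μ₂ ν ∧
      ∀ ρ ∈ P2, StOrder μ₁ ρ → StOrder μ₂ ρ → StOrder ν ρ := by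
  haveI hp₁ : IsProbabilityMeasure μ₁ := h₁.1
  haveI hp₂ : IsProbabilityMeasure μ₂ := h₂.1
  classical
  open ProbabilityTheory in
  -- The minimum of the two CDFs, as a Stieltjes function
  set F : StieltjesFunction ℝ :=
    { toFun := fun x => min (cdf μ₁ x) (cdf μ₂ x)
      mono' := Monotone.min (monotone_cdf _) (monotone_cdf _)
      right_continuous' := fun x =>
        ((cdf μ₁).right_continuous x).min ((cdf μ₂).right_continuous x) } with hF
  have hbot : Tendsto F atBot (𝓝 0) := by
    have := (tendsto_cdf_atBot (μ := μ₁)).min (tendsto_cdf_atBot (μ := μ₂))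
    simpa using this
  have htop : Tendsto F atTop (𝓝 1) := by
    have := (tendsto_cdf_atTop (μ := μ₁)).min (tendsto_cdf_atTop (μ := μ₂))
    simpa using this
  set ν : Measure ℝ := F.measure with hν
  haveI hprob : IsProbabilityMeasure ν := F.isProbabilityMeasure hbot htop
  have hIic : ∀ x, ν (Iic x) = min (μ₁ (Iic x)) (μ₂ (Iic x)) := by
    intro x
    rw [hν, F.measure_Iic hbot x, sub_zero]
    have : F x = min (cdf μ₁ x) (cdf μ₂ x) := rfl
    rw [this, Monotone.map_min (f := ENNReal.ofReal) (fun _ _ h => ENNReal.ofReal_le_ofReal h),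
      ofReal_cdf, ofReal_cdf]
  have hle₁ : ∀ x, ν (Iic x) ≤ μ₁ (Iic x) := fun x => (hIic x).le.trans (min_le_left _ _)
  have hle₂ : ∀ x, ν (Iic x) ≤ μ₂ (Iic x) := fun x => (hIic x).le.trans (min_le_right _ _)
  -- tail bounds for ν
  have hIoi : ∀ x, ν (Ioi x) ≤ μ₁ (Ioi x) + μ₂ (Ioi x) := by
    intro x
    rw [← compl_Iic, prob_compl_eq_one_sub measurableSet_Iic,
      prob_compl_eq_one_sub measurableSet_Iic (μ := μ₁),
      prob_compl_eq_one_sub measurableSet_Iic (μ := μ₂), hIic x]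
    rcases min_cases (μ₁ (Iic x)) (μ₂ (Iic x)) with ⟨hm, _⟩ | ⟨hm, _⟩ <;> rw [hm]
    · exact le_self_add
    · exact le_add_self
  have hIci : ∀ x, ν (Ici x) ≤ μ₁ (Ici x) + μ₂ (Ici x) := by
    intro x
    have hiInter : ∀ (κ : Measure ℝ) [IsProbabilityMeasure κ],
        Tendsto (fun n : ℕ => κ (Ioi (x - ((n : ℝ) + 1)⁻¹))) atTop (𝓝 (κ (Ici x))) := by
      intro κ _
      have hmono : Antitone (fun n : ℕ => Ioi (x - ((n : ℝ) + 1)⁻¹)) := by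
        intro n m hnm
        apply Ioi_subset_Ioi
        have : ((m : ℝ) + 1)⁻¹ ≤ ((n : ℝ) + 1)⁻¹ :=
          inv_anti₀ (by positivity) (by exact_mod_cast by linarith)
        linarith
      have := tendsto_measure_iInter_atTop (μ := κ)
        (fun n => measurableSet_Ioi.nullMeasurableSet) hmono ⟨0, measure_ne_top _ _⟩
      rwa [← Ici_eq_iInter_Ioi x] at this
    refine le_of_tendsto_of_tendsto' (hiInter ν) (Tendsto.add (hiInter μ₁) (hiInter μ₂))
      fun n => hIoi _
  -- second moment of ν
  have hsqm : Measurable (fun a : ℝ => a ^ 2) := by measurability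
  have hsq_int : Integrable (fun a : ℝ => a ^ 2) ν := by
    have hset : ∀ t : ℝ, 0 < t →
        {a : ℝ | t ≤ a ^ 2} = Iic (-Real.sqrt t) ∪ Ici (Real.sqrt t) := by
      intro t ht
      ext a
      simp only [mem_setOf_eq, mem_union, mem_Iic, mem_Ici]
      rw [show (t ≤ a ^ 2 ↔ Real.sqrt t ≤ |a|) from ?_]
      · rw [le_abs]
        constructor
        · rintro (h | h)
          · exact Or.inr h
          · exact Or.inl (by linarith)
        · rintro (h | h)
          · exact Or.inr (by linarith)
          · exact Or.inl h
      · constructor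
        · intro h
          calc Real.sqrt t ≤ Real.sqrt (a ^ 2) := Real.sqrt_le_sqrt h
          _ = |a| := Real.sqrt_sq_eq_abs a
        · intro h
          calc t = Real.sqrt t ^ 2 := (Real.sq_sqrt ht.le).symm
          _ ≤ |a| ^ 2 := pow_le_pow_left₀ (Real.sqrt_nonneg t) h 2
          _ = a ^ 2 := sq_abs a
    have hanti : ∀ (κ : Measure ℝ), Measurable (fun t : ℝ => κ {a : ℝ | t ≤ a ^ 2}) := by
      intro κ
      apply Antitone.measurable
      intro s t hst
      exact measure_mono fun a ha => le_trans hst ha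
    have key : ∫⁻ a, ENNReal.ofReal (a ^ 2) ∂ν ≤
        2 * ∫⁻ a, ENNReal.ofReal (a ^ 2) ∂μ₁ + 2 * ∫⁻ a, ENNReal.ofReal (a ^ 2) ∂μ₂ := by
      rw [lintegral_eq_lintegral_meas_le ν (ae_of_all _ fun a => sq_nonneg a) hsqm.aemeasurable,
        lintegral_eq_lintegral_meas_le μ₁ (ae_of_all _ fun a => sq_nonneg a) hsqm.aemeasurable,
        lintegral_eq_lintegral_meas_le μ₂ (ae_of_all _ fun a => sq_nonneg a) hsqm.aemeasurable,
        ← lintegral_const_mul 2 (hanti μ₁), ← lintegral_const_mul 2 (hanti μ₂),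
        ← lintegral_add_left (((hanti μ₁).const_mul 2))]
      refine setLIntegral_mono (((hanti μ₁).const_mul 2).add ((hanti μ₂).const_mul 2))
        fun t ht => ?_
      have ht0 : (0:ℝ) < t := ht
      have hS := hset t ht0
      have hsub1 : Iic (-Real.sqrt t) ⊆ {a : ℝ | t ≤ a ^ 2} := by
        rw [hS]; exact subset_union_left
      have hsub2 : Ici (Real.sqrt t) ⊆ {a : ℝ | t ≤ a ^ 2} := by
        rw [hS]; exact subset_union_right
      calc ν {a : ℝ | t ≤ a ^ 2}
          ≤ ν (Iic (-Real.sqrt t)) + ν (Ici (Real.sqrt t)) := by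
            rw [hS]; exact measure_union_le _ _
        _ ≤ μ₁ (Iic (-Real.sqrt t)) + (μ₁ (Ici (Real.sqrt t)) + μ₂ (Ici (Real.sqrt t))) :=
            add_le_add (hle₁ _) (hIci _)
        _ ≤ μ₁ {a : ℝ | t ≤ a ^ 2} +
            (μ₁ {a : ℝ | t ≤ a ^ 2} + μ₂ {a : ℝ | t ≤ a ^ 2}) :=
            add_le_add (measure_mono hsub1)
              (add_le_add (measure_mono hsub2) (measure_mono hsub2))
        _ ≤ 2 * μ₁ {a : ℝ | t ≤ a ^ 2} + 2 * μ₂ {a : ℝ | t ≤ a ^ 2} := by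
            rw [two_mul, two_mul]
            calc μ₁ {a : ℝ | t ≤ a ^ 2} +
                (μ₁ {a : ℝ | t ≤ a ^ 2} + μ₂ {a : ℝ | t ≤ a ^ 2})
                ≤ μ₁ {a : ℝ | t ≤ a ^ 2} + μ₁ {a : ℝ | t ≤ a ^ 2} +
                  (μ₂ {a : ℝ | t ≤ a ^ 2} + μ₂ {a : ℝ | t ≤ a ^ 2}) := by
                  rw [add_assoc]
                  exact add_le_add le_rfl (add_le_add le_rfl le_self_add)
              _ = _ := rfl
    have hfin : ∀ (κ : Measure ℝ), Integrable (fun a : ℝ => a ^ 2) κ →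
        ∫⁻ a, ENNReal.ofReal (a ^ 2) ∂κ ≠ ⊤ := by
      intro κ hκ
      have := hκ.2
      rw [hasFiniteIntegral_iff_ofReal (ae_of_all _ fun a => sq_nonneg a)] at this
      exact this.ne
    refine ⟨hsqm.aestronglyMeasurable, ?_⟩
    rw [hasFiniteIntegral_iff_ofReal (ae_of_all _ fun a => sq_nonneg a)]
    refine lt_of_le_of_lt key ?_
    exact ENNReal.add_lt_top.mpr
      ⟨ENNReal.mul_lt_top (by norm_num) (hfin μ₁ h₁.2).lt_top,
        ENNReal.mul_lt_top (by norm_num) (hfin μ₂ h₂.2).lt_top⟩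
  refine ⟨ν, ⟨hprob, hsq_int⟩, hIic, stOrder_of_cdf_le μ₁ ν hle₁, stOrder_of_cdf_le μ₂ ν hle₂,
    ?_⟩
  intro ρ hρ hρ1 hρ2
  haveI := hρ.1
  refine stOrder_of_cdf_le ν ρ fun x => ?_
  rw [hIic x]
  exact le_min (cdf_le_of_stOrder μ₁ ρ hρ1 x) (cdf_le_of_stOrder μ₂ ρ hρ2 x)
end
end

section
/- A family M of probability measures in 𝒫₂(ℝ) is bounded from above with respect to the stochastic order (i.e., there exists ν ∈ 𝒫₂(ℝ) with μ ≤_st ν for all μ ∈ M) if and only if ∫₀^∞ (sup_{μ∈M} μ((u,∞))) · u du < ∞. -/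
open MeasureTheory Filter Set
open scoped ENNReal NNReal Topology

noncomputable section

lemma meas_Ioi_eq_iSup (μ : Measure ℝ) (x : ℝ) :
    μ (Ioi x) = ⨆ n : ℕ, μ (Ioi (x + 1/(n+1))) := by
  have hU : Ioi x = ⋃ n : ℕ, Ioi (x + 1/(n+1)) := by
    ext y
    simp only [mem_Ioi, mem_iUnion]
    constructor
    · intro hy
      obtain ⟨n, hn⟩ := exists_nat_one_div_lt (show (0:ℝ) < y - x by linarith)
      exact ⟨n, by push_cast at hn ⊢; linarith⟩
    · rintro ⟨n, hn⟩
      have : (0:ℝ) < 1/(n+1) := by positivity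
      linarith
  rw [hU]
  apply Directed.measure_iUnion
  apply Monotone.directed_le
  intro m n hmn
  apply Ioi_subset_Ioi
  have : (1:ℝ)/(n+1) ≤ 1/(m+1) := by
    apply one_div_le_one_div_of_le (by positivity)
    push_cast; exact_mod_cast Nat.add_le_add_right hmn 1
  linarith

lemma meas_Ici_le {μ ν : Measure ℝ} [IsFiniteMeasure μ] [IsFiniteMeasure ν]
    (h : ∀ u, μ (Ioi u) ≤ ν (Ioi u)) (a : ℝ) : μ (Ici a) ≤ ν (Ici a) := by
  have hI : Ici a = ⋂ n : ℕ, Ioi (a - 1/(n+1)) := by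
    ext y
    simp only [mem_Ici, mem_iInter, mem_Ioi]
    constructor
    · intro hy n
      have : (0:ℝ) < 1/(n+1) := by positivity
      linarith
    · intro hy
      by_contra hya
      push_neg at hya
      obtain ⟨n, hn⟩ := exists_nat_one_div_lt (show (0:ℝ) < a - y by linarith)
      have := hy n
      push_cast at hn
      linarith
  have hdir : Directed (· ⊇ ·) (fun n : ℕ => Ioi (a - 1/(n+1))) := by
    apply Antitone.directed_ge
    intro m n hmn
    apply Ioi_subset_Ioi
    have : (1:ℝ)/(n+1) ≤ 1/(m+1) := by
      apply one_div_le_one_div_of_le (by positivity)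
      push_cast; exact_mod_cast Nat.add_le_add_right hmn 1
    linarith
  rw [hI, Directed.measure_iInter (fun n => (measurableSet_Ioi).nullMeasurableSet) hdir
      ⟨0, measure_ne_top _ _⟩,
    Directed.measure_iInter (fun n => (measurableSet_Ioi).nullMeasurableSet) hdir
      ⟨0, measure_ne_top _ _⟩]
  exact le_iInf fun n => iInf_le_of_le n (h _)

lemma meas_upper_le_s3 {μ ν : Measure ℝ} [IsProbabilityMeasure μ] [IsProbabilityMeasure ν]
    (h : ∀ u, μ (Ioi u) ≤ ν (Ioi u)) (s : Set ℝ)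
    (hs : ∀ ⦃x y : ℝ⦄, x ∈ s → x ≤ y → y ∈ s) : μ s ≤ ν s := by
  rcases s.eq_empty_or_nonempty with rfl | hne
  · simp
  by_cases hbdd : BddBelow s
  · set a := sInf s with ha
    by_cases hmem : a ∈ s
    · have : s = Ici a := by
        apply Subset.antisymm
        · exact fun x hx => csInf_le hbdd hx
        · exact fun x hx => hs hmem hx
      rw [this]; exact meas_Ici_le h a
    · have : s = Ioi a := by
        apply Subset.antisymm
        · intro x hx
          exact lt_of_le_of_ne (csInf_le hbdd hx) (fun hc => hmem (show sInf s ∈ s from hc ▸ hx))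
        · intro x hx
          obtain ⟨y, hy, hyx⟩ := exists_lt_of_csInf_lt hne hx
          exact hs hy hyx.le
      rw [this]; exact h a
  · have : s = univ := by
      apply eq_univ_of_forall
      intro x
      rw [not_bddBelow_iff] at hbdd
      obtain ⟨y, hy, hyx⟩ := hbdd x
      exact hs hy hyx.le
    rw [this]
    simp [measure_univ]



lemma tail_le_of_stOrder {μ ν : Measure ℝ} [IsProbabilityMeasure μ] [IsProbabilityMeasure ν]
    (h : StOrder μ ν) (u : ℝ) : μ (Ioi u) ≤ ν (Ioi u) := by
  have hmono : Monotone ((Ioi u).indicator (1 : ℝ → ℝ)) := by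
    intro a b hab
    by_cases ha : a ∈ Ioi u
    · have hb : b ∈ Ioi u := lt_of_lt_of_le ha hab
      simp [indicator_of_mem, ha, hb]
    · by_cases hb : b ∈ Ioi u <;> simp [indicator_of_mem, indicator_of_notMem, ha, hb]
  have hbdd : ∃ C : ℝ, ∀ x, |(Ioi u).indicator (1 : ℝ → ℝ) x| ≤ C := by
    refine ⟨1, fun x => ?_⟩
    by_cases hx : x ∈ Ioi u <;> simp [indicator_of_mem, indicator_of_notMem, hx]
  have := h _ hmono hbdd
  rw [integral_indicator_one measurableSet_Ioi, integral_indicator_one measurableSet_Ioi] at this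
  exact (ENNReal.toReal_le_toReal (measure_ne_top _ _) (measure_ne_top _ _)).mp this

lemma bounded_integrable {μ : Measure ℝ} [IsProbabilityMeasure μ] {f : ℝ → ℝ} {C : ℝ}
    (hf : Monotone f) (hC : ∀ x, |f x| ≤ C) : Integrable f μ := by
  refine Integrable.mono' (integrable_const C) hf.measurable.aestronglyMeasurable ?_
  exact Eventually.of_forall fun x => by simpa using hC x

lemma stOrder_of_tail {μ ν : Measure ℝ} [IsProbabilityMeasure μ] [IsProbabilityMeasure ν]
    (h : ∀ u, μ (Ioi u) ≤ ν (Ioi u)) : StOrder μ ν := by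
  intro f hf ⟨C, hC⟩
  have hC0 : 0 ≤ C := le_trans (abs_nonneg _) (hC 0)
  set g : ℝ → ℝ := fun x => f x + C with hg
  have hgmono : Monotone g := fun a b hab => by simp [hg]; exact hf hab
  have hgnn : ∀ x, 0 ≤ g x := fun x => by
    have := abs_le.mp (hC x); simp [hg]; linarith
  have hgbd : ∀ x, |g x| ≤ 2 * C := fun x => by
    have := abs_le.mp (hC x)
    rw [abs_le]; constructor <;> simp [hg] <;> linarith
  have key : ∫ x, g x ∂μ ≤ ∫ x, g x ∂ν := by
    rw [integral_eq_lintegral_of_nonneg_ae (Eventually.of_forall hgnn)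
        hgmono.measurable.aestronglyMeasurable,
      integral_eq_lintegral_of_nonneg_ae (Eventually.of_forall hgnn)
        hgmono.measurable.aestronglyMeasurable]
    have hfin : ∫⁻ x, ENNReal.ofReal (g x) ∂ν ≠ ⊤ := by
      have : ∫⁻ x, ENNReal.ofReal (g x) ∂ν ≤ ∫⁻ _, ENNReal.ofReal (2*C) ∂ν := by
        apply lintegral_mono
        intro x
        exact ENNReal.ofReal_le_ofReal ((le_abs_self _).trans (hgbd x))
      rw [lintegral_const, measure_univ, mul_one] at this
      exact (lt_of_le_of_lt this ENNReal.ofReal_lt_top).ne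
    apply ENNReal.toReal_mono hfin
    rw [lintegral_eq_lintegral_meas_lt μ (Eventually.of_forall hgnn)
        hgmono.measurable.aemeasurable,
      lintegral_eq_lintegral_meas_lt ν (Eventually.of_forall hgnn)
        hgmono.measurable.aemeasurable]
    apply lintegral_mono
    intro t
    apply meas_upper_le_s3 h
    intro a b ha hab
    exact lt_of_lt_of_le ha (hgmono hab)
  have hfi : Integrable f μ := bounded_integrable hf hC
  have hfi' : Integrable f ν := bounded_integrable hf hC
  have e1 : ∫ x, g x ∂μ = ∫ x, f x ∂μ + C := by
    simp [hg, integral_add hfi (integrable_const C), measure_univ]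
  have e2 : ∫ x, g x ∂ν = ∫ x, f x ∂ν + C := by
    simp [hg, integral_add hfi' (integrable_const C), measure_univ]
  rw [e1, e2] at key
  linarith

open intervalIntegral in
lemma layercake_tail (ν : Measure ℝ) [IsProbabilityMeasure ν] :
    ∫⁻ u in Ioi (0:ℝ), ν (Ioi u) * ENNReal.ofReal u
      = ∫⁻ x, ENNReal.ofReal ((max x 0)^2/2) ∂ν := by
  have key := lintegral_comp_eq_lintegral_meas_lt_mul ν (f := fun x => max x 0) (g := id)
    (Eventually.of_forall fun x => le_max_right _ _)
    ((measurable_id.max measurable_const).aemeasurable)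
    (fun t _ => intervalIntegrable_id)
    (ae_restrict_of_forall_mem measurableSet_Ioi fun t ht => le_of_lt ht)
  have hL : ∀ x : ℝ, ENNReal.ofReal (∫ t in (0:ℝ)..(max x 0), id t)
      = ENNReal.ofReal ((max x 0)^2/2) := by
    intro x
    simp only [id]
    rw [integral_id]
    norm_num
  have hR : ∫⁻ t in Ioi (0:ℝ), ν {a : ℝ | t < max a 0} * ENNReal.ofReal (id t)
      = ∫⁻ t in Ioi (0:ℝ), ν (Ioi t) * ENNReal.ofReal t := by
    apply setLIntegral_congr_fun measurableSet_Ioi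
    intro t ht
    have : {a : ℝ | t < max a 0} = Ioi t := by
      ext a
      simp only [mem_setOf_eq, mem_Ioi, lt_max_iff]
      constructor
      · rintro (h | h)
        · exact h
        · exact absurd ht (by simpa using h.le.not_gt)
      · exact Or.inl
    beta_reduce; rw [this]; rfl
  rw [← hR, ← key]
  exact lintegral_congr fun x => hL x

lemma second_moment_tail {ν : Measure ℝ} [IsProbabilityMeasure ν]
    (h2 : Integrable (fun x : ℝ => x ^ 2) ν) :
    ∫⁻ u in Ioi (0:ℝ), ν (Ioi u) * ENNReal.ofReal u < ⊤ := by
  rw [layercake_tail]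
  have hb : ∀ x : ℝ, ENNReal.ofReal ((max x 0)^2/2) ≤ ‖x^2‖₊ := by
    intro x
    rw [← enorm_eq_nnnorm, Real.enorm_eq_ofReal (by positivity : (0:ℝ) ≤ x^2)]
    apply ENNReal.ofReal_le_ofReal
    rcases le_or_gt x 0 with hx | hx
    · rw [max_eq_right hx]; nlinarith [sq_nonneg x]
    · rw [max_eq_left hx.le]; nlinarith
  calc ∫⁻ x, ENNReal.ofReal ((max x 0)^2/2) ∂ν ≤ ∫⁻ x, (‖x^2‖₊ : ℝ≥0∞) ∂ν :=
        lintegral_mono hb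
    _ < ⊤ := h2.2

lemma integrable_sq_of_tail {ν : Measure ℝ} [IsProbabilityMeasure ν] (h0 : ν (Iio 0) = 0)
    (h : ∫⁻ u in Ioi (0:ℝ), ν (Ioi u) * ENNReal.ofReal u < ⊤) :
    Integrable (fun x : ℝ => x ^ 2) ν := by
  refine ⟨(continuous_pow 2).aestronglyMeasurable, ?_⟩
  rw [hasFiniteIntegral_iff_norm]  -- check name
  have hae : ∀ᵐ x ∂ν, ENNReal.ofReal ‖x^2‖ = 2 * ENNReal.ofReal ((max x 0)^2/2) := by
    filter_upwards [ae_iff.mpr (by simp only [not_le]; exact h0 : ν {x : ℝ | ¬ (0 ≤ x)} = 0)] with x hx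
    rw [max_eq_left hx, Real.norm_eq_abs, abs_of_nonneg (by positivity),
      show ((2:ℝ≥0∞)) = ENNReal.ofReal 2 by norm_num, ← ENNReal.ofReal_mul (by norm_num)]
    congr 1; ring
  rw [lintegral_congr_ae hae, lintegral_const_mul 2
    (by measurability)]
  rw [← layercake_tail] at *
  exact ENNReal.mul_lt_top (by norm_num) h

def Stail (M : Set (Measure ℝ)) (u : ℝ) : ℝ≥0∞ := ⨆ μ ∈ M, μ (Ioi u)



lemma Stail_anti (M : Set (Measure ℝ)) : Antitone (Stail M) := fun a b hab =>
  iSup₂_mono fun μ _ => measure_mono (Ioi_subset_Ioi hab)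

lemma Stail_le_one {M : Set (Measure ℝ)} (hM : M ⊆ P2) (u : ℝ) : Stail M u ≤ 1 :=
  iSup₂_le fun μ hμ => by
    haveI := (hM hμ).1
    exact prob_le_one

lemma Stail_ne_top {M : Set (Measure ℝ)} (hM : M ⊆ P2) (u : ℝ) : Stail M u ≠ ⊤ :=
  ((Stail_le_one hM u).trans_lt ENNReal.one_lt_top).ne

lemma Stail_sSup (M : Set (Measure ℝ)) (x : ℝ) :
    sSup (Stail M '' Ioi x) = Stail M x := by
  apply le_antisymm
  · apply sSup_le
    rintro _ ⟨y, hy, rfl⟩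
    exact Stail_anti M (le_of_lt hy)
  · apply iSup₂_le
    intro μ hμ
    rw [meas_Ioi_eq_iSup]
    apply iSup_le
    intro n
    have h1 : μ (Ioi (x + 1/(n+1))) ≤ Stail M (x + 1/(n+1)) :=
      le_biSup (fun μ : Measure ℝ => μ (Ioi (x + 1/(n+1)))) hμ
    refine h1.trans (le_sSup ⟨x + 1/(n+1), ?_, rfl⟩)
    simp only [mem_Ioi]
    have : (0:ℝ) < 1/(n+1) := by positivity
    linarith

def Fc (M : Set (Measure ℝ)) (x : ℝ) : ℝ := if x < 0 then 0 else 1 - (Stail M x).toReal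

lemma Stail_toReal_le_one {M : Set (Measure ℝ)} (hM : M ⊆ P2) (u : ℝ) :
    (Stail M u).toReal ≤ 1 := by
  have := ENNReal.toReal_mono ENNReal.one_ne_top (Stail_le_one hM u)
  simpa using this

lemma Fc_nonneg {M : Set (Measure ℝ)} (hM : M ⊆ P2) (x : ℝ) : 0 ≤ Fc M x := by
  unfold Fc
  split
  · exact le_refl 0
  · linarith [Stail_toReal_le_one hM x]

lemma Fc_mono {M : Set (Measure ℝ)} (hM : M ⊆ P2) : Monotone (Fc M) := by
  intro a b hab
  unfold Fc
  by_cases ha : a < 0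
  · rw [if_pos ha]
    split
    · exact le_refl 0
    · linarith [Stail_toReal_le_one hM b]
  · have hb : ¬ b < 0 := fun hb => ha (lt_of_le_of_lt hab hb)
    rw [if_neg ha, if_neg hb]
    have := ENNReal.toReal_mono (Stail_ne_top hM a) (Stail_anti M hab)
    linarith

lemma Fc_rightCont {M : Set (Measure ℝ)} (hM : M ⊆ P2) (x : ℝ) :
    ContinuousWithinAt (Fc M) (Ici x) x := by
  by_cases hx : x < 0
  · have hev : Fc M =ᶠ[𝓝[Ici x] x] fun _ => 0 := by
      apply eventually_nhdsWithin_of_eventually_nhds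
      filter_upwards [isOpen_Iio.mem_nhds hx] with y hy
      exact if_pos hy
    exact (continuousWithinAt_const (b := (0:ℝ))).congr_of_eventuallyEq hev (if_pos hx)
  · push_neg at hx
    have hS : Tendsto (Stail M) (𝓝[>] x) (𝓝 (Stail M x)) := by
      have h := (Stail_anti M).tendsto_nhdsGT x
      rwa [show sSup (Stail M '' Ioi x) = Stail M x from Stail_sSup M x] at h
    have hT : Tendsto (fun y => 1 - (Stail M y).toReal) (𝓝[>] x)
        (𝓝 (1 - (Stail M x).toReal)) :=
      Tendsto.const_sub _ ((ENNReal.tendsto_toReal (Stail_ne_top hM x)).comp hS)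
    have hC : ContinuousWithinAt (fun y => 1 - (Stail M y).toReal) (Ici x) x := by
      rw [← continuousWithinAt_Ioi_iff_Ici]
      exact hT
    apply hC.congr
    · intro y hy
      exact if_neg (not_lt.mpr (hx.trans hy))
    · exact if_neg (not_lt.mpr hx)

def FS (M : Set (Measure ℝ)) (hM : M ⊆ P2) : StieltjesFunction ℝ where
  toFun := Fc M
  mono' := Fc_mono hM
  right_continuous' := Fc_rightCont hM

lemma FS_atBot (M : Set (Measure ℝ)) (hM : M ⊆ P2) :
    Tendsto (FS M hM) atBot (𝓝 0) := by
  apply Tendsto.congr' _ tendsto_const_nhds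
  filter_upwards [eventually_lt_atBot (0:ℝ)] with y hy
  exact (if_pos hy).symm

lemma Stail_tendsto_zero {M : Set (Measure ℝ)}
    (hint : ∫⁻ u in Ioi (0:ℝ), Stail M u * ENNReal.ofReal u < ⊤) :
    Tendsto (Stail M) atTop (𝓝 0) := by
  have h1 : Tendsto (Stail M) atTop (𝓝 (⨅ u, Stail M u)) := tendsto_atTop_iInf (Stail_anti M)
  suffices hL : ⨅ u, Stail M u = 0 by rwa [hL] at h1
  by_contra hL
  have hvol : ∫⁻ u in Ioi (0:ℝ), ENNReal.ofReal u = ⊤ := by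
    refine top_unique ?_
    calc (⊤ : ℝ≥0∞) = volume (Ioi (1:ℝ)) := Real.volume_Ioi.symm
      _ = ∫⁻ _ in Ioi (1:ℝ), 1 := (setLIntegral_one _).symm
      _ ≤ ∫⁻ u in Ioi (1:ℝ), ENNReal.ofReal u :=
          setLIntegral_mono measurable_id.ennreal_ofReal
            (fun u hu => ENNReal.one_le_ofReal.mpr (le_of_lt hu))
      _ ≤ ∫⁻ u in Ioi (0:ℝ), ENNReal.ofReal u :=
          lintegral_mono_set (Ioi_subset_Ioi zero_le_one)
  have hge : (⨅ v, Stail M v) * ∫⁻ u in Ioi (0:ℝ), ENNReal.ofReal u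
      ≤ ∫⁻ u in Ioi (0:ℝ), Stail M u * ENNReal.ofReal u := by
    rw [← lintegral_const_mul _ ENNReal.measurable_ofReal]
    exact lintegral_mono fun u => mul_le_mul_left (iInf_le _ u) _
  rw [hvol, ENNReal.mul_top hL] at hge
  exact absurd (lt_of_le_of_lt hge hint) (lt_irrefl _)

lemma FS_atTop (M : Set (Measure ℝ)) (hM : M ⊆ P2)
    (hint : ∫⁻ u in Ioi (0:ℝ), Stail M u * ENNReal.ofReal u < ⊤) :
    Tendsto (FS M hM) atTop (𝓝 1) := by
  have h0 : Tendsto (fun y => (Stail M y).toReal) atTop (𝓝 0) := by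
    have := (ENNReal.tendsto_toReal (by simp : (0:ℝ≥0∞) ≠ ⊤)).comp (Stail_tendsto_zero hint)
    simpa [Function.comp_def] using this
  have h2 : Tendsto (fun y => 1 - (Stail M y).toReal) atTop (𝓝 1) := by
    have := Tendsto.const_sub (1:ℝ) h0
    simpa using this
  apply Tendsto.congr' _ h2
  filter_upwards [eventually_ge_atTop (0:ℝ)] with y hy
  exact (if_neg (not_lt.mpr hy)).symm

lemma nu_Iic (M : Set (Measure ℝ)) (hM : M ⊆ P2) (u : ℝ) :
    (FS M hM).measure (Iic u) = ENNReal.ofReal (Fc M u) := by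
  rw [StieltjesFunction.measure_Iic _ (FS_atBot M hM) u]
  norm_num
  rfl

lemma nu_Iio (M : Set (Measure ℝ)) (hM : M ⊆ P2) :
    (FS M hM).measure (Iio 0) = 0 := by
  have hsub : Iio (0:ℝ) ⊆ ⋃ n : ℕ, Iic (-(1/(n+1))) := by
    intro x hx
    simp only [mem_iUnion, mem_Iic]
    obtain ⟨n, hn⟩ := exists_nat_one_div_lt (show (0:ℝ) < -x by simpa using hx)
    exact ⟨n, by push_cast at hn ⊢; linarith⟩
  apply measure_mono_null hsub
  apply measure_iUnion_null
  intro n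
  rw [nu_Iic M hM]
  have hneg : (-(1/((n:ℝ)+1))) < 0 := neg_neg_of_pos (by positivity)
  rw [show Fc M (-(1/((n:ℝ)+1))) = 0 from if_pos hneg]
  simp

lemma nu_Ioi (M : Set (Measure ℝ)) (hM : M ⊆ P2)
    (hint : ∫⁻ u in Ioi (0:ℝ), Stail M u * ENNReal.ofReal u < ⊤) (u : ℝ) :
    (FS M hM).measure (Ioi u) = if u < 0 then 1 else Stail M u := by
  haveI : IsProbabilityMeasure (FS M hM).measure :=
    StieltjesFunction.isProbabilityMeasure _ (FS_atBot M hM) (FS_atTop M hM hint)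
  rw [← compl_Iic, measure_compl measurableSet_Iic (measure_ne_top _ _), measure_univ,
    nu_Iic M hM]
  by_cases hu : u < 0
  · simp [Fc, if_pos hu]
  · rw [if_neg hu, show Fc M u = 1 - (Stail M u).toReal from if_neg hu,
      ENNReal.ofReal_sub _ ENNReal.toReal_nonneg, ENNReal.ofReal_one,
      ENNReal.sub_sub_cancel ENNReal.one_ne_top
        (ENNReal.ofReal_le_one.mpr (Stail_toReal_le_one hM u)),
      ENNReal.ofReal_toReal (Stail_ne_top hM u)]

/-- A family `M ⊆ 𝒫₂(ℝ)` is bounded from above for the stochastic order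
iff `∫₀^∞ (sup_{μ∈M} μ((u,∞))) · u du < ∞`. -/
theorem bounded_above_iff_tail_integral (M : Set (Measure ℝ)) (hM : M ⊆ P2) :
    (∃ ν ∈ P2, ∀ μ ∈ M, StOrder μ ν) ↔
      (∫⁻ u in Set.Ioi (0:ℝ), (⨆ μ ∈ M, μ (Set.Ioi u)) * ENNReal.ofReal u) < ⊤ := by
  constructor
  · rintro ⟨ν, ⟨hprob, hint2⟩, hbound⟩
    haveI := hprob
    have hle : ∀ u : ℝ, Stail M u ≤ ν (Ioi u) := fun u =>
      iSup₂_le fun μ hμ => by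
        haveI := (hM hμ).1
        exact tail_le_of_stOrder (hbound μ hμ) u
    calc ∫⁻ u in Ioi (0:ℝ), Stail M u * ENNReal.ofReal u
        ≤ ∫⁻ u in Ioi (0:ℝ), ν (Ioi u) * ENNReal.ofReal u :=
          lintegral_mono fun u => mul_le_mul_left (hle u) _
      _ < ⊤ := second_moment_tail hint2
  · intro hint
    replace hint : ∫⁻ u in Ioi (0:ℝ), Stail M u * ENNReal.ofReal u < ⊤ := hint
    set ν := (FS M hM).measure with hν
    haveI : IsProbabilityMeasure ν :=
      StieltjesFunction.isProbabilityMeasure _ (FS_atBot M hM) (FS_atTop M hM hint)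
    have hIoi := nu_Ioi M hM hint
    have htail : ∫⁻ u in Ioi (0:ℝ), ν (Ioi u) * ENNReal.ofReal u < ⊤ := by
      have : ∫⁻ u in Ioi (0:ℝ), ν (Ioi u) * ENNReal.ofReal u
          = ∫⁻ u in Ioi (0:ℝ), Stail M u * ENNReal.ofReal u := by
        apply setLIntegral_congr_fun measurableSet_Ioi
        intro u hu
        beta_reduce; rw [hIoi u, if_neg (not_lt.mpr (le_of_lt hu))]
      rw [this]
      exact hint
    refine ⟨ν, ⟨inferInstance, integrable_sq_of_tail (nu_Iio M hM) htail⟩, ?_⟩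
    intro μ hμ
    haveI := (hM hμ).1
    apply stOrder_of_tail
    intro u
    rw [hIoi u]
    by_cases hu : u < 0
    · rw [if_pos hu]; exact prob_le_one
    · rw [if_neg hu]
      exact le_biSup (fun μ : Measure ℝ => μ (Ioi u)) hμ
end
end

section
/- A family M of probability measures in 𝒫₂(ℝ) is bounded from below with respect to the stochastic order (i.e., there exists ν ∈ 𝒫₂(ℝ) with ν ≤_st μ for all μ ∈ M) if and only if ∫₀^∞ (sup_{μ∈M} μ((-∞,-u])) · u du < ∞. -/
open MeasureTheory Filter Set
open scoped ENNReal Topology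

noncomputable section

namespace BddBelowTail

lemma cdf_le_of_stOrder (ν μ : Measure ℝ) [IsProbabilityMeasure ν] [IsProbabilityMeasure μ]
    (h : StOrder ν μ) (x : ℝ) : μ (Iic x) ≤ ν (Iic x) := by
  have hmono : Monotone ((Ioi x).indicator (1 : ℝ → ℝ)) := by
    intro a b hab
    by_cases ha : a ∈ Ioi x
    · have hb : b ∈ Ioi x := lt_of_lt_of_le ha hab
      simp [indicator_of_mem, ha, hb]
    · simp only [indicator]
      split_ifs <;> norm_num
  have hbdd : ∃ C : ℝ, ∀ y, |(Ioi x).indicator (1 : ℝ → ℝ) y| ≤ C :=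
    ⟨1, fun y => by by_cases hy : y ∈ Ioi x <;> simp [indicator, hy]⟩
  have hint := h _ hmono hbdd
  rw [integral_indicator_one measurableSet_Ioi, integral_indicator_one measurableSet_Ioi] at hint
  have h2 : ν (Ioi x) ≤ μ (Ioi x) :=
    (ENNReal.toReal_le_toReal (measure_ne_top _ _) (measure_ne_top _ _)).mp hint
  have e1 : μ (Iic x) = 1 - μ (Ioi x) := by
    rw [← compl_Ioi, measure_compl measurableSet_Ioi (measure_ne_top _ _), measure_univ]
  have e2 : ν (Iic x) = 1 - ν (Ioi x) := by
    rw [← compl_Ioi, measure_compl measurableSet_Ioi (measure_ne_top _ _), measure_univ]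
  rw [e1, e2]
  exact tsub_le_tsub_left h2 1

lemma iio_le (ν μ : Measure ℝ) (hcdf : ∀ x, μ (Iic x) ≤ ν (Iic x)) (b : ℝ) :
    μ (Iio b) ≤ ν (Iio b) := by
  have hunion : Iio b = ⋃ n : ℕ, Iic (b - 1 / ((n : ℝ) + 1)) := by
    ext y
    simp only [mem_Iio, mem_iUnion, mem_Iic]
    constructor
    · intro hy
      obtain ⟨n, hn⟩ := exists_nat_one_div_lt (sub_pos.mpr hy)
      exact ⟨n, by linarith⟩
    · rintro ⟨n, hn⟩
      have h0 : 0 < 1 / ((n : ℝ) + 1) := by positivity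
      linarith
  have hdir : Directed (· ⊆ ·) (fun n : ℕ => Iic (b - 1 / ((n : ℝ) + 1))) := by
    apply Monotone.directed_le
    intro n m hnm
    apply Iic_subset_Iic.mpr
    have h1 : 1 / ((m : ℝ) + 1) ≤ 1 / ((n : ℝ) + 1) := by
      apply one_div_le_one_div_of_le (by positivity)
      have : (n : ℝ) ≤ m := Nat.cast_le.mpr hnm
      linarith
    linarith
  rw [hunion, hdir.measure_iUnion, hdir.measure_iUnion]
  exact iSup_mono fun n => hcdf _

lemma upperSet_le (ν μ : Measure ℝ) [IsProbabilityMeasure ν] [IsProbabilityMeasure μ]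
    (hcdf : ∀ x, μ (Iic x) ≤ ν (Iic x)) {U : Set ℝ}
    (hU : ∀ ⦃a b : ℝ⦄, a ≤ b → a ∈ U → b ∈ U) : ν U ≤ μ U := by
  rcases eq_empty_or_nonempty U with hU0 | hne
  · simp [hU0]
  by_cases hall : ∀ z, z ∈ U
  · have : U = univ := eq_univ_of_forall hall
    simp [this]
  push_neg at hall
  obtain ⟨z, hz⟩ := hall
  have hbdd : BddBelow U := by
    refine ⟨z, fun u hu => ?_⟩
    by_contra hlt
    push_neg at hlt
    exact hz (hU hlt.le hu)
  set b := sInf U with hb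
  have hsub1 : Ioi b ⊆ U := by
    intro y hy
    obtain ⟨u, hu, huy⟩ := (csInf_lt_iff hbdd hne).mp hy
    exact hU huy.le hu
  have hsub2 : U ⊆ Ici b := fun u hu => csInf_le hbdd hu
  by_cases hbU : b ∈ U
  · have hUeq : U = Ici b := subset_antisymm hsub2 (fun y hy => hU hy hbU)
    rw [hUeq]
    have e1 : ν (Ici b) = 1 - ν (Iio b) := by
      rw [← compl_Iio, measure_compl measurableSet_Iio (measure_ne_top _ _), measure_univ]
    have e2 : μ (Ici b) = 1 - μ (Iio b) := by
      rw [← compl_Iio, measure_compl measurableSet_Iio (measure_ne_top _ _), measure_univ]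
    rw [e1, e2]
    exact tsub_le_tsub_left (iio_le ν μ hcdf b) 1
  · have hUeq : U = Ioi b := by
      refine subset_antisymm (fun u hu => ?_) hsub1
      refine lt_of_le_of_ne (mem_Ici.mp (hsub2 hu)) ?_
      intro h
      exact hbU (h ▸ hu)
    rw [hUeq]
    have e1 : ν (Ioi b) = 1 - ν (Iic b) := by
      rw [← compl_Iic, measure_compl measurableSet_Iic (measure_ne_top _ _), measure_univ]
    have e2 : μ (Ioi b) = 1 - μ (Iic b) := by
      rw [← compl_Iic, measure_compl measurableSet_Iic (measure_ne_top _ _), measure_univ]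
    rw [e1, e2]
    exact tsub_le_tsub_left (hcdf b) 1

lemma stOrder_of_cdf (ν μ : Measure ℝ) [IsProbabilityMeasure ν] [IsProbabilityMeasure μ]
    (hcdf : ∀ x, μ (Iic x) ≤ ν (Iic x)) : StOrder ν μ := by
  rintro f hf ⟨C, hC⟩
  have hm : Measurable f := hf.measurable
  have hint : ∀ (ρ : Measure ℝ), IsProbabilityMeasure ρ → Integrable f ρ := by
    intro ρ hρ
    refine ⟨hm.aestronglyMeasurable, ?_⟩
    apply HasFiniteIntegral.of_bounded (C := C)
    exact Eventually.of_forall (fun x => by simpa [Real.norm_eq_abs] using hC x)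
  have hnn : ∀ x, 0 ≤ f x + C := fun x => by
    have := (abs_le.mp (hC x)).1; linarith
  have hmC : Measurable fun x => f x + C := hm.add measurable_const
  have key : ∫ x, (f x + C) ∂ν ≤ ∫ x, (f x + C) ∂μ := by
    rw [integral_eq_lintegral_of_nonneg_ae (Eventually.of_forall hnn) hmC.aestronglyMeasurable,
        integral_eq_lintegral_of_nonneg_ae (Eventually.of_forall hnn) hmC.aestronglyMeasurable]
    have hlin : ∫⁻ x, ENNReal.ofReal (f x + C) ∂ν ≤ ∫⁻ x, ENNReal.ofReal (f x + C) ∂μ := by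
      rw [lintegral_eq_lintegral_meas_lt ν (Eventually.of_forall hnn) hmC.aemeasurable,
          lintegral_eq_lintegral_meas_lt μ (Eventually.of_forall hnn) hmC.aemeasurable]
      apply lintegral_mono
      intro t
      apply upperSet_le ν μ hcdf
      intro a b hab ha
      have : f a ≤ f b := hf hab
      simp only [mem_setOf_eq] at ha ⊢
      linarith
    have hfin : ∫⁻ x, ENNReal.ofReal (f x + C) ∂μ ≠ ⊤ := by
      apply ne_of_lt
      calc ∫⁻ x, ENNReal.ofReal (f x + C) ∂μ
          ≤ ∫⁻ _, ENNReal.ofReal (C + C) ∂μ := by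
            apply lintegral_mono
            intro x
            apply ENNReal.ofReal_le_ofReal
            have := (abs_le.mp (hC x)).2; linarith
        _ = ENNReal.ofReal (C + C) := by simp
        _ < ⊤ := ENNReal.ofReal_lt_top
    exact ENNReal.toReal_mono hfin hlin
  have eν : ∫ x, (f x + C) ∂ν = ∫ x, f x ∂ν + C := by
    rw [integral_add (hint ν inferInstance) (integrable_const C), integral_const]
    simp
  have eμ : ∫ x, (f x + C) ∂μ = ∫ x, f x ∂μ + C := by
    rw [integral_add (hint μ inferInstance) (integrable_const C), integral_const]
    simp
  rw [eν, eμ] at key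
  linarith


lemma tail_lt_top (ν : Measure ℝ) [IsProbabilityMeasure ν]
    (h2 : Integrable (fun x : ℝ => x ^ 2) ν) :
    ∫⁻ u in Ioi (0 : ℝ), ν (Iic (-u)) * ENNReal.ofReal u < ⊤ := by
  set F : ℝ → ℝ → ℝ≥0∞ := fun u x => (Iic (-u)).indicator (fun _ => ENNReal.ofReal u) x with hF
  have hFmeas : Measurable (Function.uncurry F) := by
    have : Function.uncurry F
        = {p : ℝ × ℝ | p.2 + p.1 ≤ 0}.indicator (fun p => ENNReal.ofReal p.1) := by
      ext ⟨u, x⟩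
      simp only [Function.uncurry, hF, indicator, mem_Iic, mem_setOf_eq]
      have : x ≤ -u ↔ x + u ≤ 0 := by constructor <;> intro <;> linarith
      simp [this]
    rw [this]
    exact (ENNReal.measurable_ofReal.comp measurable_fst).indicator
      (measurableSet_le (measurable_snd.add measurable_fst) measurable_const)
  have key : ∀ u : ℝ, ν (Iic (-u)) * ENNReal.ofReal u = ∫⁻ x, F u x ∂ν := by
    intro u
    rw [hF]
    simp only
    rw [lintegral_indicator measurableSet_Iic, setLIntegral_const, mul_comm]
  have inner_le : ∀ x : ℝ,
      (∫⁻ u in Ioi (0 : ℝ), F u x) ≤ ENNReal.ofReal (x ^ 2) := by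
    intro x
    have heq : ∀ u : ℝ, F u x = (Iic (-x)).indicator (fun u => ENNReal.ofReal u) u := by
      intro u
      simp only [hF, indicator, mem_Iic]
      by_cases h : x ≤ -u
      · rw [if_pos h, if_pos (by linarith)]
      · rw [if_neg h, if_neg (by intro hh; exact h (by linarith))]
    calc (∫⁻ u in Ioi (0 : ℝ), F u x)
        = ∫⁻ u in Ioi (0 : ℝ), (Iic (-x)).indicator (fun u => ENNReal.ofReal u) u :=
          lintegral_congr fun u => heq u
      _ = ∫⁻ u in Iic (-x) ∩ Ioi 0, ENNReal.ofReal u := by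
          rw [lintegral_indicator measurableSet_Iic, Measure.restrict_restrict measurableSet_Iic]
      _ = ∫⁻ u in Ioc 0 (-x), ENNReal.ofReal u := by
          have hset : Iic (-x) ∩ Ioi (0:ℝ) = Ioc 0 (-x) := by
            ext u
            simp only [mem_inter_iff, mem_Iic, mem_Ioi, mem_Ioc]
            tauto
          rw [hset]
      _ ≤ ∫⁻ _ in Ioc 0 (-x), ENNReal.ofReal (-x) := by
          apply setLIntegral_mono measurable_const
          intro u hu
          exact ENNReal.ofReal_le_ofReal hu.2
      _ = ENNReal.ofReal (-x) * volume (Ioc 0 (-x)) := setLIntegral_const _ _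
      _ ≤ ENNReal.ofReal (x ^ 2) := by
          rw [Real.volume_Ioc]
          rcases le_or_gt x 0 with hx | hx
          · rw [← ENNReal.ofReal_mul (by linarith)]
            apply ENNReal.ofReal_le_ofReal
            nlinarith
          · rw [ENNReal.ofReal_of_nonpos (by linarith)]
            simp
  calc ∫⁻ u in Ioi (0 : ℝ), ν (Iic (-u)) * ENNReal.ofReal u
      = ∫⁻ u in Ioi (0 : ℝ), ∫⁻ x, F u x ∂ν := lintegral_congr fun u => key u
    _ = ∫⁻ x, (∫⁻ u in Ioi (0 : ℝ), F u x) ∂ν := by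
        exact lintegral_lintegral_swap (μ := volume.restrict (Ioi 0)) (ν := ν) hFmeas.aemeasurable
    _ ≤ ∫⁻ x, ENNReal.ofReal (x ^ 2) ∂ν := lintegral_mono (μ := ν) inner_le
    _ < ⊤ := by
        have := h2.hasFiniteIntegral
        rw [HasFiniteIntegral] at this
        refine lt_of_eq_of_lt ?_ this
        apply lintegral_congr
        intro x
        rw [← Real.enorm_eq_ofReal (by positivity : (0:ℝ) ≤ x ^ 2)]


lemma construct (M : Set (Measure ℝ)) (hM : M ⊆ P2)
    (hI : (∫⁻ u in Set.Ioi (0:ℝ), (⨆ μ ∈ M, μ (Set.Iic (-u))) * ENNReal.ofReal u) < ⊤) :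
    ∃ ν ∈ P2, ∀ μ ∈ M, ∀ x : ℝ, μ (Iic x) ≤ ν (Iic x) := by
  classical
  set G : ℝ → ℝ≥0∞ := fun u => ⨆ μ ∈ M, μ (Iic (-u)) with hGdef
  have hGle : ∀ u, G u ≤ 1 := by
    intro u
    refine iSup₂_le fun μ hμ => ?_
    haveI := (hM hμ).1
    exact prob_le_one
  have hGne : ∀ u, G u ≠ ⊤ := fun u => ((hGle u).trans_lt ENNReal.one_lt_top).ne
  have hGanti : Antitone G := by
    intro u v huv
    exact iSup₂_mono fun μ _ => measure_mono (Iic_subset_Iic.mpr (by linarith))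
  have hGmeas : Measurable G := Antitone.measurable hGanti
  set T : ℝ → ℝ := fun y => if 0 ≤ y then 1 else (G (-y)).toReal with hTdef
  have hT0 : ∀ y, 0 ≤ T y := by
    intro y
    simp only [hTdef]
    split_ifs
    · norm_num
    · exact ENNReal.toReal_nonneg
  have hT1 : ∀ y, T y ≤ 1 := by
    intro y
    simp only [hTdef]
    split_ifs
    · exact le_rfl
    · have h := ENNReal.toReal_mono (a := G (-y)) (by norm_num : (1:ℝ≥0∞) ≠ ⊤) (hGle (-y))
      simpa using h
  set g : ℝ → ℝ := fun x => ⨅ y : Ioi x, T y with hgdef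
  have hne : ∀ x : ℝ, Nonempty (Ioi x) := fun x => ⟨⟨x + 1, by simp [mem_Ioi]⟩⟩
  have hbddT : ∀ x : ℝ, BddBelow (range fun y : Ioi x => T y) := by
    intro x
    refine ⟨0, ?_⟩
    rintro _ ⟨y, rfl⟩
    exact hT0 _
  have hg_le_T : ∀ {x y : ℝ}, x < y → g x ≤ T y := by
    intro x y h
    exact ciInf_le (hbddT x) ⟨y, h⟩
  have hg0 : ∀ x, 0 ≤ g x := by
    intro x
    haveI := hne x
    exact le_ciInf fun y => hT0 _
  have hg1 : ∀ x, g x ≤ 1 := fun x => (hg_le_T (lt_add_one x)).trans (hT1 _)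
  have hgmono : Monotone g := by
    intro x z hxz
    haveI := hne z
    refine le_ciInf ?_
    rintro ⟨y, hy⟩
    exact ciInf_le_of_le (hbddT x) ⟨y, lt_of_le_of_lt hxz hy⟩ le_rfl
  have hg_one : ∀ x : ℝ, 0 ≤ x → g x = 1 := by
    intro x hx
    refine le_antisymm (hg1 x) ?_
    haveI := hne x
    refine le_ciInf ?_
    rintro ⟨y, hy⟩
    simp only [hTdef]
    rw [if_pos (by exact le_of_lt (lt_of_le_of_lt hx hy))]
  have hrc : ∀ x, ContinuousWithinAt g (Ici x) x := by
    intro x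
    rw [← continuousWithinAt_Ioi_iff_Ici]
    have htd := hgmono.tendsto_nhdsGT x
    have hkey : sInf (g '' Ioi x) = g x := by
      have hbddim : BddBelow (g '' Ioi x) := by
        refine ⟨0, ?_⟩
        rintro _ ⟨w, _, rfl⟩
        exact hg0 w
      apply le_antisymm
      · show sInf (g '' Ioi x) ≤ ⨅ y : Ioi x, T y
        haveI := hne x
        refine le_ciInf ?_
        rintro ⟨z, hz⟩
        have hmid1 : x < (x + z) / 2 := by simp only [mem_Ioi] at hz; linarith
        have hmid2 : (x + z) / 2 < z := by simp only [mem_Ioi] at hz; linarith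
        calc sInf (g '' Ioi x) ≤ g ((x + z) / 2) :=
              csInf_le hbddim (mem_image_of_mem _ hmid1)
          _ ≤ T z := hg_le_T hmid2
      · refine le_csInf ((nonempty_Ioi (a := x)).image g) ?_
        rintro _ ⟨w, hw, rfl⟩
        exact hgmono (le_of_lt hw)
    rwa [hkey] at htd
  set gSt : StieltjesFunction ℝ := ⟨g, hgmono, hrc⟩ with hgSt
  have hcoe : ∀ x, gSt x = g x := fun _ => rfl
  -- limits
  have htop : Tendsto g atTop (𝓝 1) := by
    have hev : g =ᶠ[atTop] fun _ => (1 : ℝ) := by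
      filter_upwards [eventually_ge_atTop (0 : ℝ)] with x hx
      exact hg_one x hx
    exact Tendsto.congr' hev.symm tendsto_const_nhds
  set I : ℝ≥0∞ := ∫⁻ u in Set.Ioi (0:ℝ), G u * ENNReal.ofReal u with hIdef
  have hIfin : I < ⊤ := hI
  have hdecay : ∀ u : ℝ, 0 < u →
      G u * (ENNReal.ofReal (u / 2) * ENNReal.ofReal (u / 2)) ≤ I := by
    intro u hu
    have hvol : volume (Ioc (u / 2) u) = ENNReal.ofReal (u / 2) := by
      rw [Real.volume_Ioc]
      congr 1
      ring
    calc G u * (ENNReal.ofReal (u / 2) * ENNReal.ofReal (u / 2))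
        = ∫⁻ _ in Ioc (u / 2) u, G u * ENNReal.ofReal (u / 2) := by
          rw [setLIntegral_const, hvol, mul_assoc]
      _ ≤ ∫⁻ t in Ioc (u / 2) u, G t * ENNReal.ofReal t := by
          refine setLIntegral_mono' measurableSet_Ioc fun t ht => ?_
          exact mul_le_mul' (hGanti ht.2) (ENNReal.ofReal_le_ofReal ht.1.le)
      _ ≤ I := by
          refine lintegral_mono_set fun t ht => ?_
          simp only [mem_Ioi]
          have := ht.1
          linarith
  have hdecayR : ∀ u : ℝ, 0 < u → (G u).toReal ≤ I.toReal / (u / 2 * (u / 2)) := by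
    intro u hu
    have h1 := ENNReal.toReal_mono hIfin.ne (hdecay u hu)
    rw [ENNReal.toReal_mul, ENNReal.toReal_mul, ENNReal.toReal_ofReal (by linarith)] at h1
    rw [le_div_iff₀ (by positivity)]
    linarith
  have hbot : Tendsto g atBot (𝓝 0) := by
    have hb : Tendsto (fun x : ℝ => I.toReal / (-x / 4 * (-x / 4))) atBot (𝓝 0) := by
      have h4 : Tendsto (fun x : ℝ => -x / 4) atBot atTop :=
        Tendsto.atTop_div_const (by norm_num) tendsto_neg_atBot_atTop
      have hsq : Tendsto (fun x : ℝ => -x / 4 * (-x / 4)) atBot atTop :=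
        h4.atTop_mul_atTop₀ h4
      simpa only [div_eq_mul_inv, mul_zero, Pi.inv_apply] using
        (tendsto_const_nhds (x := I.toReal)).mul hsq.inv_tendsto_atTop
    refine tendsto_of_tendsto_of_tendsto_of_le_of_le' tendsto_const_nhds hb
      (Eventually.of_forall hg0) ?_
    filter_upwards [eventually_lt_atBot (0 : ℝ)] with x hx
    have h1 : g x ≤ T (x / 2) := hg_le_T (by linarith)
    have h2 : T (x / 2) = (G (-(x / 2))).toReal := by
      simp only [hTdef]
      rw [if_neg (by linarith)]
    have h3 : (G (-(x / 2))).toReal ≤ I.toReal / (-(x / 2) / 2 * (-(x / 2) / 2)) :=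
      hdecayR _ (by linarith)
    have h4 : -(x / 2) / 2 = -x / 4 := by ring
    rw [h4] at h3
    rw [h2] at h1
    linarith
  -- the measure
  set ν : Measure ℝ := gSt.measure with hνdef
  have hbot' : Tendsto (⇑gSt) atBot (𝓝 0) := hbot
  have htop' : Tendsto (⇑gSt) atTop (𝓝 1) := htop
  have hνIic : ∀ x, ν (Iic x) = ENNReal.ofReal (g x) := by
    intro x
    rw [hνdef, gSt.measure_Iic hbot' x, sub_zero]
  haveI hνprob : IsProbabilityMeasure ν := by
    constructor
    rw [hνdef, gSt.measure_univ hbot' htop']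
    norm_num
  -- domination
  have hdom : ∀ μ ∈ M, ∀ x : ℝ, μ (Iic x) ≤ ν (Iic x) := by
    intro μ hμ x
    haveI := (hM hμ).1
    have h1 : (μ (Iic x)).toReal ≤ g x := by
      haveI := hne x
      refine le_ciInf ?_
      rintro ⟨y, hy⟩
      simp only [hTdef]
      split_ifs with h
      · simpa using ENNReal.toReal_mono (by norm_num : (1:ℝ≥0∞) ≠ ⊤) (prob_le_one (μ := μ))
      · refine ENNReal.toReal_mono (hGne (-y)) ?_
        calc μ (Iic x) ≤ μ (Iic y) := measure_mono (Iic_subset_Iic.mpr hy.le)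
          _ ≤ G (-y) := by
              show μ (Iic y) ≤ ⨆ μ' ∈ M, μ' (Iic (-(-y)))
              simp only [neg_neg]
              exact le_iSup₂ (f := fun (μ' : Measure ℝ) (_ : μ' ∈ M) => μ' (Iic y)) μ hμ
    calc μ (Iic x) = ENNReal.ofReal ((μ (Iic x)).toReal) :=
          (ENNReal.ofReal_toReal (measure_ne_top _ _)).symm
      _ ≤ ENNReal.ofReal (g x) := ENNReal.ofReal_le_ofReal h1
      _ = ν (Iic x) := (hνIic x).symm
  -- support in Iic 0
  have hν0 : ν (Ioi 0) = 0 := by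
    have h1 : ν (Iic 0) = 1 := by
      rw [hνIic 0, hg_one 0 le_rfl]
      exact ENNReal.ofReal_one
    have h2 := measure_compl (μ := ν) (s := Iic (0:ℝ)) measurableSet_Iic (measure_ne_top _ _)
    rw [compl_Iic, h1, measure_univ] at h2
    simpa using h2
  -- second moment
  set F2 : ℝ → ℝ → ℝ≥0∞ := fun x u => (Iio (-u)).indicator (fun _ => ENNReal.ofReal u) x with hF2
  have hF2meas : Measurable (Function.uncurry F2) := by
    have he : Function.uncurry F2
        = {p : ℝ × ℝ | p.1 + p.2 < 0}.indicator (fun p => ENNReal.ofReal p.2) := by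
      ext ⟨x, u⟩
      simp only [Function.uncurry, hF2, indicator, mem_Iio, mem_setOf_eq]
      have hiff : x < -u ↔ x + u < 0 := by constructor <;> intro <;> linarith
      simp [hiff]
    rw [he]
    exact (ENNReal.measurable_ofReal.comp measurable_snd).indicator
      (measurableSet_lt (measurable_fst.add measurable_snd) measurable_const)
  have hptwise : ∀ x : ℝ, x ≤ 0 →
      ENNReal.ofReal (x ^ 2) ≤ 4 * ∫⁻ u in Ioi (0:ℝ), F2 x u := by
    intro x hx
    rcases hx.eq_or_lt with rfl | hx'
    · simp
    · have heq : ∀ u : ℝ, F2 x u = (Iio (-x)).indicator (fun u => ENNReal.ofReal u) u := by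
        intro u
        simp only [hF2, indicator, mem_Iio]
        by_cases h : x < -u
        · rw [if_pos h, if_pos (by linarith)]
        · rw [if_neg h, if_neg (by intro hh; exact h (by linarith))]
      have hinner : ∫⁻ u in Ioi (0:ℝ), F2 x u = ∫⁻ u in Ioo 0 (-x), ENNReal.ofReal u := by
        rw [lintegral_congr heq, lintegral_indicator measurableSet_Iio,
          Measure.restrict_restrict measurableSet_Iio]
        rw [show Iio (-x) ∩ Ioi (0:ℝ) = Ioo 0 (-x) from by
          ext u; simp only [mem_inter_iff, mem_Iio, mem_Ioi, mem_Ioo]; tauto]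
      rw [hinner]
      calc ENNReal.ofReal (x ^ 2) = 4 * ENNReal.ofReal (x ^ 2 / 4) := by
            rw [show (4:ℝ≥0∞) = ENNReal.ofReal 4 from by norm_num,
              ← ENNReal.ofReal_mul (by norm_num)]
            congr 1
            ring
        _ ≤ 4 * ∫⁻ u in Ioo 0 (-x), ENNReal.ofReal u := by
            refine mul_le_mul_right ?_ 4
            calc ENNReal.ofReal (x ^ 2 / 4)
                = ENNReal.ofReal (-x / 2) * volume (Ico (-x / 2) (-x)) := by
                  rw [Real.volume_Ico, ← ENNReal.ofReal_mul (by linarith)]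
                  congr 1
                  ring
              _ = ∫⁻ _ in Ico (-x / 2) (-x), ENNReal.ofReal (-x / 2) :=
                  (setLIntegral_const _ _).symm
              _ ≤ ∫⁻ u in Ico (-x / 2) (-x), ENNReal.ofReal u :=
                  setLIntegral_mono' measurableSet_Ico fun u hu =>
                    ENNReal.ofReal_le_ofReal hu.1
              _ ≤ ∫⁻ u in Ioo 0 (-x), ENNReal.ofReal u :=
                  lintegral_mono_set fun u hu => ⟨by linarith [hu.1], hu.2⟩
  -- change of variables
  have hsub : (∫⁻ u in Ioi (0:ℝ), G (u / 2) * ENNReal.ofReal u) = 4 * I := by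
    have hmapvol : (volume : Measure ℝ) = (2:ℝ≥0∞) • Measure.map (fun t : ℝ => 2 * t) volume := by
      rw [Real.map_volume_mul_left (by norm_num : (2:ℝ) ≠ 0), smul_smul]
      rw [abs_of_pos (by norm_num : (0:ℝ) < 2⁻¹),
        ENNReal.ofReal_inv_of_pos (by norm_num : (0:ℝ) < 2)]
      rw [show ENNReal.ofReal (2:ℝ) = 2 from by norm_num]
      rw [ENNReal.mul_inv_cancel (by norm_num) (by norm_num), one_smul]
    have hfmeas : Measurable fun u : ℝ =>
        (Ioi (0:ℝ)).indicator (fun u => G (u / 2) * ENNReal.ofReal u) u :=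
      ((hGmeas.comp (measurable_id.div_const 2)).mul ENNReal.measurable_ofReal).indicator
        measurableSet_Ioi
    calc ∫⁻ u in Ioi (0:ℝ), G (u / 2) * ENNReal.ofReal u
        = ∫⁻ u, (Ioi (0:ℝ)).indicator (fun u => G (u / 2) * ENNReal.ofReal u) u :=
          (lintegral_indicator measurableSet_Ioi _).symm
      _ = 2 * ∫⁻ t, (Ioi (0:ℝ)).indicator (fun u => G (u / 2) * ENNReal.ofReal u) (2 * t) := by
          conv_lhs => rw [hmapvol]
          rw [lintegral_smul_measure, lintegral_map hfmeas (measurable_const_mul 2), smul_eq_mul]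
      _ = 2 * ∫⁻ t, (Ioi (0:ℝ)).indicator (fun t => G t * (2 * ENNReal.ofReal t)) t := by
          congr 1
          apply lintegral_congr
          intro t
          by_cases ht : 0 < t
          · rw [indicator_of_mem (show (2 * t) ∈ Ioi (0:ℝ) from by
                simp only [mem_Ioi]; linarith),
              indicator_of_mem (mem_Ioi.mpr ht)]
            rw [show (2 * t) / 2 = t from by ring]
            rw [show ENNReal.ofReal (2 * t) = 2 * ENNReal.ofReal t from by
              rw [ENNReal.ofReal_mul (by norm_num)]; norm_num]
          · rw [indicator_of_notMem (show (2 * t) ∉ Ioi (0:ℝ) from by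
                simp only [mem_Ioi, not_lt]; nlinarith [not_lt.mp ht]),
              indicator_of_notMem (by simpa [mem_Ioi] using ht)]
      _ = 2 * (2 * ∫⁻ t in Ioi (0:ℝ), G t * ENNReal.ofReal t) := by
          congr 1
          rw [lintegral_indicator measurableSet_Ioi]
          calc ∫⁻ t in Ioi (0:ℝ), G t * (2 * ENNReal.ofReal t)
              = ∫⁻ t in Ioi (0:ℝ), 2 * (G t * ENNReal.ofReal t) :=
                lintegral_congr fun t => by rw [mul_left_comm]
            _ = 2 * ∫⁻ t in Ioi (0:ℝ), G t * ENNReal.ofReal t :=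
                lintegral_const_mul' 2 _ (by norm_num)
      _ = 4 * I := by
          rw [hIdef, ← mul_assoc]
          norm_num
  have hmoment : ∫⁻ x, ENNReal.ofReal (x ^ 2) ∂ν < ⊤ := by
    have hsplit := (lintegral_add_compl (μ := ν) (A := Iic (0:ℝ))
      (fun x => ENNReal.ofReal (x ^ 2)) measurableSet_Iic).symm
    rw [compl_Iic, setLIntegral_measure_zero _ _ hν0, add_zero] at hsplit
    rw [hsplit]
    calc ∫⁻ x in Iic 0, ENNReal.ofReal (x ^ 2) ∂ν
        ≤ ∫⁻ x in Iic 0, 4 * (∫⁻ u in Ioi (0:ℝ), F2 x u) ∂ν :=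
          setLIntegral_mono' measurableSet_Iic fun x hx => hptwise x hx
      _ = 4 * ∫⁻ x in Iic 0, (∫⁻ u in Ioi (0:ℝ), F2 x u) ∂ν :=
          lintegral_const_mul' 4 _ (by norm_num)
      _ = 4 * ∫⁻ u in Ioi (0:ℝ), (∫⁻ x in Iic 0, F2 x u ∂ν) := by
          rw [lintegral_lintegral_swap (μ := ν.restrict (Iic 0))
            (ν := volume.restrict (Ioi 0)) hF2meas.aemeasurable]
      _ ≤ 4 * ∫⁻ u in Ioi (0:ℝ), G (u / 2) * ENNReal.ofReal u := by
          refine mul_le_mul_right ?_ 4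
          refine setLIntegral_mono' measurableSet_Ioi fun u hu => ?_
          have hu0 : (0:ℝ) < u := hu
          have hx1 : ∫⁻ x in Iic 0, F2 x u ∂ν
              = ENNReal.ofReal u * (ν.restrict (Iic 0)) (Iio (-u)) := by
            rw [lintegral_indicator measurableSet_Iio, setLIntegral_const]
          rw [hx1]
          have h2 : (ν.restrict (Iic 0)) (Iio (-u)) ≤ ν (Iic (-u)) := by
            rw [Measure.restrict_apply measurableSet_Iio]
            refine measure_mono fun y hy => ?_
            rw [mem_Iic]
            exact le_of_lt (mem_Iio.mp hy.1)
          have h3 : ν (Iic (-u)) ≤ G (u / 2) := by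
            rw [hνIic]
            have hgu : g (-u) ≤ (G (u / 2)).toReal := by
              have hh := hg_le_T (show -u < -u / 2 by linarith)
              simp only [hTdef] at hh
              rw [if_neg (by linarith)] at hh
              rw [show -(-u / 2) = u / 2 from by ring] at hh
              exact hh
            calc ENNReal.ofReal (g (-u)) ≤ ENNReal.ofReal ((G (u / 2)).toReal) :=
                  ENNReal.ofReal_le_ofReal hgu
              _ = G (u / 2) := ENNReal.ofReal_toReal (hGne _)
          calc ENNReal.ofReal u * (ν.restrict (Iic 0)) (Iio (-u))
              ≤ ENNReal.ofReal u * G (u / 2) := mul_le_mul_right (h2.trans h3) _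
            _ = G (u / 2) * ENNReal.ofReal u := mul_comm _ _
      _ = 4 * (4 * I) := by rw [hsub]
      _ < ⊤ := by
          refine ENNReal.mul_lt_top (by norm_num) ?_
          exact ENNReal.mul_lt_top (by norm_num) hIfin
  have hint2 : Integrable (fun x : ℝ => x ^ 2) ν := by
    refine ⟨(measurable_id.pow_const 2).aestronglyMeasurable, ?_⟩
    rw [HasFiniteIntegral]
    refine lt_of_eq_of_lt ?_ hmoment
    apply lintegral_congr
    intro x
    rw [← Real.enorm_eq_ofReal (by positivity : (0:ℝ) ≤ x ^ 2)]
  exact ⟨ν, ⟨hνprob, hint2⟩, hdom⟩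

end BddBelowTail

/-- A family `M ⊆ 𝒫₂(ℝ)` is bounded from below for the stochastic order
iff `∫₀^∞ (sup_{μ∈M} μ((-∞,-u])) · u du < ∞`. -/
theorem bounded_below_iff_tail_integral (M : Set (Measure ℝ)) (hM : M ⊆ P2) :
    (∃ ν ∈ P2, ∀ μ ∈ M, StOrder ν μ) ↔
      (∫⁻ u in Set.Ioi (0:ℝ), (⨆ μ ∈ M, μ (Set.Iic (-u))) * ENNReal.ofReal u) < ⊤ := by
  constructor
  · rintro ⟨ν, ⟨hνp, hν2⟩, hst⟩
    haveI := hνp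
    refine lt_of_le_of_lt ?_ (BddBelowTail.tail_lt_top ν hν2)
    refine lintegral_mono fun u => ?_
    refine mul_le_mul_left ?_ _
    refine iSup₂_le fun μ hμ => ?_
    haveI := (hM hμ).1
    exact BddBelowTail.cdf_le_of_stOrder ν μ (hst μ hμ) (-u)
  · intro hI
    obtain ⟨ν, hν, hdom⟩ := BddBelowTail.construct M hM hI
    refine ⟨ν, hν, fun μ hμ => ?_⟩
    haveI := hν.1
    haveI := (hM hμ).1
    exact BddBelowTail.stOrder_of_cdf ν μ (hdom μ hμ)
end
end

section
/- If a family M of probability measures in 𝒫₂(ℝ) is bounded from above with respect to the stochastic order, then M has a supremum: there exists ν = sup_{≤_st} M ∈ 𝒫₂(ℝ), namely the measure whose cumulative distribution function is F(x) = inf_{μ∈M} F_μ(x), and any other upper bound ν̃ of M satisfies ν ≤_st ν̃. -/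
open MeasureTheory Filter Set ProbabilityTheory Topology

noncomputable section

lemma iic_le_of_stOrder {μ ν : Measure ℝ} [IsProbabilityMeasure μ] [IsProbabilityMeasure ν]
    (h : StOrder μ ν) (x : ℝ) : ν (Iic x) ≤ μ (Iic x) := by
  have hmono : Monotone ((Ioi x).indicator (1 : ℝ → ℝ)) := by
    intro a b hab
    simp only [Set.indicator_apply, mem_Ioi, Pi.one_apply]
    split_ifs with h1 h2
    · exact le_refl _
    · exact absurd (lt_of_lt_of_le h1 hab) h2
    · norm_num
    · exact le_refl _
  have hbd : ∃ C : ℝ, ∀ y, |(Ioi x).indicator (1 : ℝ → ℝ) y| ≤ C := by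
    refine ⟨1, fun y => ?_⟩
    by_cases hy : y ∈ Ioi x
    · rw [indicator_of_mem hy]; norm_num
    · rw [indicator_of_notMem hy]; norm_num
  have key := h _ hmono hbd
  rw [integral_indicator_one measurableSet_Ioi, integral_indicator_one measurableSet_Ioi] at key
  have h2 : μ (Ioi x) ≤ ν (Ioi x) :=
    (ENNReal.toReal_le_toReal (measure_ne_top _ _) (measure_ne_top _ _)).mp key
  have hμ : μ (Iic x) = 1 - μ (Ioi x) := by
    rw [← compl_Ioi, prob_compl_eq_one_sub measurableSet_Ioi]
  have hν : ν (Iic x) = 1 - ν (Ioi x) := by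
    rw [← compl_Ioi, prob_compl_eq_one_sub measurableSet_Ioi]
  rw [hμ, hν]
  exact tsub_le_tsub_left h2 1

lemma iio_le_of_iic_le {μ ν : Measure ℝ} (h : ∀ y, ν (Iic y) ≤ μ (Iic y)) (a : ℝ) :
    ν (Iio a) ≤ μ (Iio a) := by
  have hset : Iio a = ⋃ n : ℕ, Iic (a - 1 / (n + 1)) := by
    ext y
    simp only [mem_Iio, mem_iUnion, mem_Iic]
    constructor
    · intro hy
      obtain ⟨n, hn⟩ := exists_nat_one_div_lt (sub_pos.mpr hy)
      exact ⟨n, by linarith⟩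
    · rintro ⟨n, hn⟩
      have : (0:ℝ) < 1 / (n + 1) := by positivity
      linarith
  have key : ∀ k l : ℕ, k ≤ l → Iic (a - 1/((k:ℝ)+1)) ⊆ Iic (a - 1/((l:ℝ)+1)) := by
    intro k l hkl
    apply Iic_subset_Iic.mpr
    have h1 : (1:ℝ)/((l:ℝ)+1) ≤ 1/((k:ℝ)+1) := by
      apply one_div_le_one_div_of_le
      · positivity
      · have : (k:ℝ) ≤ l := by exact_mod_cast hkl
        linarith
    linarith
  have hdir : Directed (· ⊆ ·) fun n : ℕ => Iic (a - 1 / ((n:ℝ) + 1)) := by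
    intro m n
    exact ⟨max m n, key _ _ (le_max_left _ _), key _ _ (le_max_right _ _)⟩
  rw [hset, hdir.measure_iUnion]
  refine iSup_le fun n => (h _).trans (measure_mono ?_)
  exact subset_iUnion (fun n : ℕ => Iic (a - 1 / ((n:ℝ) + 1))) n

lemma measure_le_of_isUpperSet {μ ν : Measure ℝ} [IsProbabilityMeasure μ] [IsProbabilityMeasure ν]
    (h : ∀ y, ν (Iic y) ≤ μ (Iic y)) {U : Set ℝ} (hU : IsUpperSet U) : μ U ≤ ν U := by
  rcases U.eq_empty_or_nonempty with rfl | hne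
  · simp
  by_cases hbd : BddBelow U
  · set a := sInf U with ha
    have hsub : U ⊆ Ici a := fun u hu => csInf_le hbd hu
    have hIoi : Ioi a ⊆ U := by
      intro y hy
      obtain ⟨u, hu, huy⟩ := exists_lt_of_csInf_lt hne hy
      exact hU huy.le hu
    by_cases haU : a ∈ U
    · have hUeq : U = Ici a := by
        refine subset_antisymm hsub fun y hy => ?_
        rcases eq_or_lt_of_le (mem_Ici.mp hy) with rfl | hlt
        · exact haU
        · exact hIoi hlt
      rw [hUeq, ← compl_Iio, prob_compl_eq_one_sub measurableSet_Iio,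
        prob_compl_eq_one_sub measurableSet_Iio]
      exact tsub_le_tsub_left (iio_le_of_iic_le h a) 1
    · have hUeq : U = Ioi a := by
        refine subset_antisymm (fun y hy => ?_) hIoi
        rcases eq_or_lt_of_le (mem_Ici.mp (hsub hy)) with rfl | hlt
        · exact absurd hy haU
        · exact hlt
      rw [hUeq, ← compl_Iic, prob_compl_eq_one_sub measurableSet_Iic,
        prob_compl_eq_one_sub measurableSet_Iic]
      exact tsub_le_tsub_left (h a) 1
  · have hUeq : U = univ := by
      refine eq_univ_of_forall fun y => ?_
      obtain ⟨u, hu, huy⟩ := (not_bddBelow_iff.mp hbd) y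
      exact hU huy.le hu
    rw [hUeq]
    simp

lemma measure_le_of_isLowerSet {μ ν : Measure ℝ}
    (h : ∀ y, ν (Iic y) ≤ μ (Iic y)) [IsProbabilityMeasure μ] [IsProbabilityMeasure ν]
    {L : Set ℝ} (hL : IsLowerSet L) : ν L ≤ μ L := by
  rcases L.eq_empty_or_nonempty with rfl | hne
  · simp
  by_cases hbd : BddAbove L
  · set b := sSup L with hb
    have hsub : L ⊆ Iic b := fun u hu => le_csSup hbd hu
    have hIio : Iio b ⊆ L := by
      intro y hy
      obtain ⟨u, hu, huy⟩ := exists_lt_of_lt_csSup hne hy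
      exact hL huy.le hu
    by_cases hbL : b ∈ L
    · have hLeq : L = Iic b := by
        refine subset_antisymm hsub fun y hy => ?_
        rcases eq_or_lt_of_le (mem_Iic.mp hy) with rfl | hlt
        · exact hbL
        · exact hIio hlt
      rw [hLeq]; exact h b
    · have hLeq : L = Iio b := by
        refine subset_antisymm (fun y hy => ?_) hIio
        rcases eq_or_lt_of_le (mem_Iic.mp (hsub hy)) with rfl | hlt
        · exact absurd hy hbL
        · exact hlt
      rw [hLeq]; exact iio_le_of_iic_le h b
  · have hLeq : L = univ := by
      refine eq_univ_of_forall fun y => ?_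
      obtain ⟨u, hu, huy⟩ := (not_bddAbove_iff.mp hbd) y
      exact hL huy.le hu
    rw [hLeq]
    simp

lemma lintegral_le_of_monotone {μ ν : Measure ℝ} [IsProbabilityMeasure μ] [IsProbabilityMeasure ν]
    (h : ∀ y, ν (Iic y) ≤ μ (Iic y)) {g : ℝ → ℝ} (hg : Monotone g) (hg0 : ∀ x, 0 ≤ g x) :
    ∫⁻ x, ENNReal.ofReal (g x) ∂μ ≤ ∫⁻ x, ENNReal.ofReal (g x) ∂ν := by
  rw [lintegral_eq_lintegral_meas_lt μ (ae_of_all _ hg0) hg.measurable.aemeasurable,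
    lintegral_eq_lintegral_meas_lt ν (ae_of_all _ hg0) hg.measurable.aemeasurable]
  refine lintegral_mono fun t => measure_le_of_isUpperSet h ?_
  intro a b hab hta
  exact lt_of_lt_of_le hta (hg hab)

lemma lintegral_le_of_antitone {μ ν : Measure ℝ} [IsProbabilityMeasure μ] [IsProbabilityMeasure ν]
    (h : ∀ y, ν (Iic y) ≤ μ (Iic y)) {g : ℝ → ℝ} (hg : Antitone g) (hg0 : ∀ x, 0 ≤ g x) :
    ∫⁻ x, ENNReal.ofReal (g x) ∂ν ≤ ∫⁻ x, ENNReal.ofReal (g x) ∂μ := by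
  rw [lintegral_eq_lintegral_meas_lt μ (ae_of_all _ hg0) hg.measurable.aemeasurable,
    lintegral_eq_lintegral_meas_lt ν (ae_of_all _ hg0) hg.measurable.aemeasurable]
  refine lintegral_mono fun t => measure_le_of_isLowerSet h ?_
  intro a b hab hta
  exact lt_of_lt_of_le hta (hg hab)

lemma stOrder_of_iic_le {μ ν : Measure ℝ} [IsProbabilityMeasure μ] [IsProbabilityMeasure ν]
    (h : ∀ y, ν (Iic y) ≤ μ (Iic y)) : StOrder μ ν := by
  rintro f hf ⟨C, hC⟩
  set g : ℝ → ℝ := fun x => f x + C with hgdef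
  have hg : Monotone g := fun a b hab => by simp only [hgdef]; linarith [hf hab]
  have hg0 : ∀ x, 0 ≤ g x := fun x => by
    have := abs_le.mp (hC x); simp only [hgdef]; linarith [this.1]
  have hgbd : ∀ x, g x ≤ 2 * C := fun x => by
    have := abs_le.mp (hC x); simp only [hgdef]; linarith [this.2]
  have hfint : ∀ (ρ : Measure ℝ) [IsProbabilityMeasure ρ], Integrable f ρ := by
    intro ρ _
    refine (integrable_const C).mono' hf.measurable.aestronglyMeasurable ?_
    exact ae_of_all _ fun x => by rw [Real.norm_eq_abs]; exact hC x
  have hrepr : ∀ (ρ : Measure ℝ) [IsProbabilityMeasure ρ],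
      ∫ x, f x ∂ρ + C = (∫⁻ x, ENNReal.ofReal (g x) ∂ρ).toReal := by
    intro ρ _
    have h1 : ∫ x, g x ∂ρ = ∫ x, f x ∂ρ + C := by
      rw [hgdef]
      rw [integral_add (hfint ρ) (integrable_const C), integral_const]
      simp
    rw [← h1, integral_eq_lintegral_of_nonneg_ae (ae_of_all _ hg0)
      hg.measurable.aestronglyMeasurable]
  have hfin : ∫⁻ x, ENNReal.ofReal (g x) ∂ν ≠ ⊤ := by
    refine ne_top_of_le_ne_top (b := ENNReal.ofReal (2 * C)) ENNReal.ofReal_ne_top ?_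
    calc ∫⁻ x, ENNReal.ofReal (g x) ∂ν ≤ ∫⁻ _, ENNReal.ofReal (2 * C) ∂ν :=
        lintegral_mono fun x => ENNReal.ofReal_le_ofReal (hgbd x)
      _ = ENNReal.ofReal (2 * C) := by rw [lintegral_const]; simp
  have key := lintegral_le_of_monotone h hg hg0
  have := ENNReal.toReal_mono hfin key
  rw [← hrepr μ, ← hrepr ν] at this
  linarith

/-- If a nonempty family `M ⊆ 𝒫₂(ℝ)` is bounded above for the stochastic
order, it has a supremum in `𝒫₂(ℝ)`, namely the measure whose CDF is
`F(x) = inf_{μ∈M} F_μ(x)`; every other upper bound dominates it. -/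
theorem stochastic_order_sup_exists (M : Set (Measure ℝ)) (hM : M ⊆ P2)
    (hne : M.Nonempty) (hub : ∃ ν ∈ P2, ∀ μ ∈ M, StOrder μ ν) :
    ∃ ν ∈ P2, (∀ x : ℝ, ν (Set.Iic x) = ⨅ μ ∈ M, μ (Set.Iic x)) ∧
      (∀ μ ∈ M, StOrder μ ν) ∧
      ∀ ν' ∈ P2, (∀ μ ∈ M, StOrder μ ν') → StOrder ν ν' := by

  obtain ⟨νt, ⟨hνtp, hνt2⟩, hνtub⟩ := hub
  obtain ⟨μ0, hμ0⟩ := hne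
  haveI := hνtp
  haveI hμ0p : IsProbabilityMeasure μ0 := (hM hμ0).1
  haveI : Nonempty M := ⟨⟨μ0, hμ0⟩⟩
  have hprobM : ∀ m : M, IsProbabilityMeasure (m : Measure ℝ) := fun m => (hM m.2).1
  set G : ℝ → ℝ := fun x => ⨅ m : M, cdf (m : Measure ℝ) x with hGdef
  have hbdd : ∀ x : ℝ, BddBelow (Set.range fun m : M => cdf (m : Measure ℝ) x) :=
    fun x => ⟨0, by rintro _ ⟨m, rfl⟩; exact cdf_nonneg _ _⟩
  have hG0 : ∀ x, 0 ≤ G x := fun x => le_ciInf fun m => cdf_nonneg _ _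
  have hGle : ∀ (m : M) (x : ℝ), G x ≤ cdf (m : Measure ℝ) x := fun m x => ciInf_le (hbdd x) m
  have hGmono : Monotone G := fun x y hxy =>
    le_ciInf fun m => (hGle m x).trans (monotone_cdf _ hxy)
  have hGrc : ∀ x, ContinuousWithinAt G (Ici x) x := by
    intro x
    rw [Metric.continuousWithinAt_iff]
    intro ε hε
    have hlt : G x < G x + ε / 2 := by linarith
    obtain ⟨m, hm⟩ := exists_lt_of_ciInf_lt hlt
    have hrc := (cdf (m : Measure ℝ)).right_continuous x
    rw [Metric.continuousWithinAt_iff] at hrc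
    obtain ⟨δ, hδ, hδ'⟩ := hrc (ε / 2) (by linarith)
    refine ⟨δ, hδ, fun y hy hyd => ?_⟩
    have h1 : G x ≤ G y := hGmono hy
    have h2 := hδ' hy hyd
    rw [Real.dist_eq] at h2 ⊢
    have h3 : cdf (m : Measure ℝ) y - cdf (m : Measure ℝ) x < ε / 2 :=
      lt_of_le_of_lt (le_abs_self _) h2
    have h4 : G y ≤ cdf (m : Measure ℝ) y := hGle m y
    rw [abs_of_nonneg (by linarith)]
    linarith
  set FS : StieltjesFunction ℝ := ⟨G, hGmono, hGrc⟩ with hFSdef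
  have hνtle : ∀ x, cdf νt x ≤ G x := by
    intro x
    refine le_ciInf fun m => ?_
    haveI := hprobM m
    have h := iic_le_of_stOrder (hνtub m m.2) x
    rw [cdf_eq_real, cdf_eq_real]
    exact ENNReal.toReal_mono (measure_ne_top _ _) h
  have hG1 : ∀ x, G x ≤ 1 := fun x => (hGle ⟨μ0, hμ0⟩ x).trans (cdf_le_one _ _)
  have hbot : Tendsto (⇑FS) atBot (𝓝 0) :=
    tendsto_of_tendsto_of_tendsto_of_le_of_le tendsto_const_nhds
      (tendsto_cdf_atBot μ0) hG0 (hGle ⟨μ0, hμ0⟩)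
  have htop : Tendsto (⇑FS) atTop (𝓝 1) :=
    tendsto_of_tendsto_of_tendsto_of_le_of_le (tendsto_cdf_atTop νt) tendsto_const_nhds hνtle hG1
  set ν : Measure ℝ := FS.measure with hνdef
  haveI hνp : IsProbabilityMeasure ν := ⟨by rw [FS.measure_univ hbot htop]; simp⟩
  have hνIic : ∀ x, ν (Iic x) = ENNReal.ofReal (G x) := fun x => by
    rw [hνdef, StieltjesFunction.measure_Iic FS hbot x, sub_zero]
  have hνle : ∀ (m : M) (x : ℝ), ν (Iic x) ≤ (m : Measure ℝ) (Iic x) := by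
    intro m x
    haveI := hprobM m
    rw [hνIic, ← ofReal_cdf (m : Measure ℝ) x]
    exact ENNReal.ofReal_le_ofReal (hGle m x)
  have hνt_le_ν : ∀ y, νt (Iic y) ≤ ν (Iic y) := fun y => by
    rw [hνIic, ← ofReal_cdf νt y]; exact ENNReal.ofReal_le_ofReal (hνtle y)
  -- second moment
  have hmax : Monotone (fun x : ℝ => (max x 0) ^ 2) := by
    intro a b hab
    exact pow_le_pow_left₀ (le_max_right a 0) (max_le_max hab le_rfl) 2
  have hmin : Antitone (fun x : ℝ => (min x 0) ^ 2) := by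
    intro a b hab
    have h1 : min b 0 ≤ 0 := min_le_right _ _
    have h2 : min a 0 ≤ min b 0 := min_le_min hab le_rfl
    calc (min b 0) ^ 2 = (-(min b 0)) ^ 2 := by ring
      _ ≤ (-(min a 0)) ^ 2 := pow_le_pow_left₀ (by linarith) (by linarith) 2
      _ = (min a 0) ^ 2 := by ring
  have hsplit : ∀ x : ℝ, ENNReal.ofReal (x ^ 2) =
      ENNReal.ofReal ((max x 0) ^ 2) + ENNReal.ofReal ((min x 0) ^ 2) := by
    intro x
    rcases le_total x 0 with hx | hx
    · rw [max_eq_right hx, min_eq_left hx]; simp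
    · rw [max_eq_left hx, min_eq_right hx]; simp
  have hfin : ∀ (ρ : Measure ℝ), Integrable (fun x : ℝ => x ^ 2) ρ →
      ∫⁻ x, ENNReal.ofReal (x ^ 2) ∂ρ ≠ ⊤ := fun ρ hρ =>
    ((hasFiniteIntegral_iff_ofReal (ae_of_all _ fun x => sq_nonneg x)).mp
      hρ.hasFiniteIntegral).ne
  have hmaxle : ∀ x : ℝ, (max x 0) ^ 2 ≤ x ^ 2 := by
    intro x
    rcases le_total x 0 with hx | hx
    · rw [max_eq_right hx]; simpa using sq_nonneg x
    · rw [max_eq_left hx]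
  have hminle : ∀ x : ℝ, (min x 0) ^ 2 ≤ x ^ 2 := by
    intro x
    rcases le_total x 0 with hx | hx
    · rw [min_eq_left hx]
    · rw [min_eq_right hx]; simpa using sq_nonneg x
  have h2int : Integrable (fun x : ℝ => x ^ 2) ν := by
    constructor
    · exact (continuous_pow 2).aestronglyMeasurable
    · rw [hasFiniteIntegral_iff_ofReal (ae_of_all _ fun x => sq_nonneg x)]
      have hA : ∫⁻ x, ENNReal.ofReal ((max x 0) ^ 2) ∂ν ≤
          ∫⁻ x, ENNReal.ofReal ((max x 0) ^ 2) ∂νt :=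
        lintegral_le_of_monotone hνt_le_ν hmax fun x => sq_nonneg _
      have hB : ∫⁻ x, ENNReal.ofReal ((min x 0) ^ 2) ∂ν ≤
          ∫⁻ x, ENNReal.ofReal ((min x 0) ^ 2) ∂μ0 :=
        lintegral_le_of_antitone (hνle ⟨μ0, hμ0⟩) hmin fun x => sq_nonneg _
      have hA' : ∫⁻ x, ENNReal.ofReal ((max x 0) ^ 2) ∂νt ≤ ∫⁻ x, ENNReal.ofReal (x ^ 2) ∂νt :=
        lintegral_mono fun x => ENNReal.ofReal_le_ofReal (hmaxle x)
      have hB' : ∫⁻ x, ENNReal.ofReal ((min x 0) ^ 2) ∂μ0 ≤ ∫⁻ x, ENNReal.ofReal (x ^ 2) ∂μ0 :=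
        lintegral_mono fun x => ENNReal.ofReal_le_ofReal (hminle x)
      calc ∫⁻ x, ENNReal.ofReal (x ^ 2) ∂ν
          = ∫⁻ x, (ENNReal.ofReal ((max x 0) ^ 2) + ENNReal.ofReal ((min x 0) ^ 2)) ∂ν :=
            lintegral_congr fun x => hsplit x
        _ = (∫⁻ x, ENNReal.ofReal ((max x 0) ^ 2) ∂ν) +
            ∫⁻ x, ENNReal.ofReal ((min x 0) ^ 2) ∂ν :=
            lintegral_add_left (ENNReal.measurable_ofReal.comp hmax.measurable) _
        _ ≤ (∫⁻ x, ENNReal.ofReal (x ^ 2) ∂νt) + ∫⁻ x, ENNReal.ofReal (x ^ 2) ∂μ0 :=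
            add_le_add (hA.trans hA') (hB.trans hB')
        _ < ⊤ := ENNReal.add_lt_top.mpr
            ⟨(hfin νt hνt2).lt_top, (hfin μ0 (hM hμ0).2).lt_top⟩
  refine ⟨ν, ⟨hνp, h2int⟩, ?_, ?_, ?_⟩
  · intro x
    have h1 : ⨅ μ ∈ M, μ (Iic x) = ⨅ m : M, (m : Measure ℝ) (Iic x) := by
      rw [iInf_subtype']
    have h2 : ENNReal.ofReal (⨅ m : M, cdf (m : Measure ℝ) x) =
        ⨅ m : M, ENNReal.ofReal (cdf (m : Measure ℝ) x) :=
      Monotone.map_ciInf_of_continuousAt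
        (ENNReal.continuous_ofReal.continuousAt)
        (fun a b hab => ENNReal.ofReal_le_ofReal hab) (hbdd x)
    rw [hνIic, h1, hGdef, h2]
    exact iInf_congr fun m => by haveI := hprobM m; exact ofReal_cdf _ x
  · intro μ hμ
    haveI := (hM hμ).1
    exact stOrder_of_iic_le fun y => hνle ⟨μ, hμ⟩ y
  · rintro ν' ⟨hν'p, _⟩ hub'
    haveI := hν'p
    refine stOrder_of_iic_le fun y => ?_
    have hle : cdf ν' y ≤ G y := by
      refine le_ciInf fun m => ?_
      haveI := hprobM m
      have h := iic_le_of_stOrder (hub' m m.2) y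
      rw [cdf_eq_real, cdf_eq_real]
      exact ENNReal.toReal_mono (measure_ne_top _ _) h
    rw [hνIic, ← ofReal_cdf ν' y]
    exact ENNReal.ofReal_le_ofReal hle
end
end

section
/- If M ⊂ 𝒫₂(ℝ) is order bounded with respect to the stochastic order (there exist μ̲, μ̄ ∈ 𝒫₂(ℝ) with μ̲ ≤_st μ ≤_st μ̄ for all μ ∈ M), then M is tight and 2-uniformly integrable, i.e., lim_{N→∞} sup_{μ∈M} ∫_{|x|≥N} |x|² dμ(x) = 0; consequently M is relatively compact in the 2-Wasserstein space (𝒫₂(ℝ), 𝒲₂). -/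
open MeasureTheory Filter Set ENNReal
open ProbabilityTheory

noncomputable section

/-- The `p`-Wasserstein distance (ENNReal-valued), as an infimum over couplings. -/
def Wp (p : ℝ) (μ ν : Measure ℝ) : ℝ≥0∞ :=
  ⨅ (π : Measure (ℝ × ℝ)) (_ : π.map Prod.fst = μ) (_ : π.map Prod.snd = ν),
    (∫⁻ q, ENNReal.ofReal (|q.1 - q.2| ^ p) ∂π) ^ (1 / p)

/-- The 2-Wasserstein distance. -/
def W2 (μ ν : Measure ℝ) : ℝ≥0∞ := Wp 2 μ ν

/-- Convergence of a sequence of measures in the 2-Wasserstein distance. -/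
def W2Tendsto (μs : ℕ → Measure ℝ) (μ : Measure ℝ) : Prop :=
  Tendsto (fun n => W2 (μs n) μ) atTop (nhds 0)


/-- Quantile function of a measure on ℝ, with junk value 0 outside `(0,1)`. -/
def qf (μ : Measure ℝ) (t : ℝ) : ℝ :=
  if 0 < t ∧ t < 1 then sInf {x | t ≤ cdf μ x} else 0

variable {μ ν : Measure ℝ}

lemma qf_set_nonempty (μ : Measure ℝ) {t : ℝ} (ht : t < 1) :
    {x | t ≤ cdf μ x}.Nonempty := by
  exact ((tendsto_cdf_atTop μ).eventually_const_le ht).exists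

lemma qf_set_bddBelow (μ : Measure ℝ) {t : ℝ} (ht : 0 < t) :
    BddBelow {x | t ≤ cdf μ x} := by
  obtain ⟨y, hy⟩ := ((tendsto_cdf_atBot μ).eventually_lt_const ht).exists
  refine ⟨y, fun x hx => ?_⟩
  by_contra hxy
  exact absurd (le_trans hx (monotone_cdf μ (le_of_not_ge hxy))) (not_le.2 hy)

lemma qf_eq {t : ℝ} (ht : t ∈ Ioo (0:ℝ) 1) : qf μ t = sInf {x | t ≤ cdf μ x} := by
  simp [qf, ht.1, ht.2]

lemma le_cdf_qf {t : ℝ} (ht : t ∈ Ioo (0:ℝ) 1) : t ≤ cdf μ (qf μ t) := by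
  rw [qf_eq ht]
  set S := {x | t ≤ cdf μ x} with hS
  set Q := sInf S with hQ
  refine le_of_forall_pos_le_add fun ε hε => ?_
  have hrc : ContinuousWithinAt (cdf μ) (Ici Q) Q := (cdf μ).right_continuous Q
  have hev : ∀ᶠ x in nhdsWithin Q (Ici Q), cdf μ x < cdf μ Q + ε :=
    hrc.eventually (eventually_lt_nhds (by linarith))
  rw [eventually_nhdsWithin_iff, Metric.eventually_nhds_iff] at hev
  obtain ⟨δ, hδ, hball⟩ := hev
  obtain ⟨x, hxS, hxlt⟩ := exists_lt_of_csInf_lt (qf_set_nonempty μ ht.2) (lt_add_of_pos_right Q hδ)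
  have hQx : Q ≤ x := csInf_le (qf_set_bddBelow μ ht.1) hxS
  have : cdf μ x < cdf μ Q + ε := by
    apply hball (show dist x Q < δ by rw [Real.dist_eq, abs_of_nonneg (by linarith)]; linarith) hQx
  exact le_trans hxS this.le

lemma qf_le_iff {t x : ℝ} (ht : t ∈ Ioo (0:ℝ) 1) :
    qf μ t ≤ x ↔ t ≤ cdf μ x := by
  constructor
  · intro h
    exact le_trans (le_cdf_qf ht) (monotone_cdf μ h)
  · intro h
    rw [qf_eq ht]
    exact csInf_le (qf_set_bddBelow μ ht.1) h

lemma qf_monotoneOn : MonotoneOn (qf μ) (Ioo (0:ℝ) 1) := by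
  intro s hs t ht hst
  rw [qf_eq hs, qf_eq ht]
  exact csInf_le_csInf (qf_set_bddBelow μ hs.1) (qf_set_nonempty μ ht.2)
    fun x hx => le_trans hst hx

lemma qf_measurable (μ : Measure ℝ) : Measurable (qf μ) := by
  apply measurable_of_Iic
  intro x
  have : qf μ ⁻¹' Iic x =
      (Ioo (0:ℝ) 1 ∩ Iic (cdf μ x)) ∪ ((Ioo (0:ℝ) 1)ᶜ ∩ (if 0 ≤ x then univ else ∅)) := by
    ext t
    by_cases ht : t ∈ Ioo (0:ℝ) 1
    · simp only [mem_preimage, mem_Iic, mem_union, mem_inter_iff, ht, mem_compl_iff,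
        not_true_eq_false, false_and, or_false, true_and, qf_le_iff ht]
    · have ht' : ¬ (0 < t ∧ t < 1) := by simpa [Set.mem_Ioo] using ht
      simp only [mem_preimage, mem_Iic, qf, ht', if_false, mem_union, mem_inter_iff,
        mem_compl_iff, ht, false_and, not_false_eq_true, true_and, false_or]
      split <;> simp_all
  rw [this]
  apply MeasurableSet.union
  · exact measurableSet_Ioo.inter measurableSet_Iic
  · exact measurableSet_Ioo.compl.inter (by split <;> simp)

instance vol01_prob : IsProbabilityMeasure (volume.restrict (Ioo (0:ℝ) 1)) := by
  constructor
  simp [Real.volume_Ioo]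

lemma map_qf (hμ : IsProbabilityMeasure μ) :
    Measure.map (qf μ) (volume.restrict (Ioo (0:ℝ) 1)) = μ := by
  have : IsProbabilityMeasure (Measure.map (qf μ) (volume.restrict (Ioo (0:ℝ) 1))) :=
    Measure.isProbabilityMeasure_map (qf_measurable μ).aemeasurable
  refine MeasureTheory.Measure.ext_of_Iic _ μ fun x => ?_
  rw [Measure.map_apply (qf_measurable μ) measurableSet_Iic,
    Measure.restrict_apply (qf_measurable μ measurableSet_Iic)]
  have hset : qf μ ⁻¹' Iic x ∩ Ioo (0:ℝ) 1 = Ioo (0:ℝ) 1 ∩ Iic (cdf μ x) := by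
    ext t
    constructor
    · rintro ⟨h1, h2⟩
      exact ⟨h2, (qf_le_iff h2).1 h1⟩
    · rintro ⟨h2, h1⟩
      exact ⟨(qf_le_iff h2).2 h1, h2⟩
  rw [hset, ← ofReal_cdf μ x]
  rcases lt_or_ge (cdf μ x) 1 with hc | hc
  · have : Ioo (0:ℝ) 1 ∩ Iic (cdf μ x) = Ioc 0 (cdf μ x) := by
      ext t
      simp only [mem_inter_iff, mem_Ioo, mem_Iic, mem_Ioc]
      constructor
      · rintro ⟨⟨h1, h2⟩, h3⟩; exact ⟨h1, h3⟩
      · rintro ⟨h1, h3⟩; exact ⟨⟨h1, lt_of_le_of_lt h3 hc⟩, h3⟩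
    rw [this, Real.volume_Ioc, sub_zero]
  · have hc1 : cdf μ x = 1 := le_antisymm (cdf_le_one μ x) hc
    have : Ioo (0:ℝ) 1 ∩ Iic (cdf μ x) = Ioo (0:ℝ) 1 := by
      rw [inter_eq_left, hc1]
      exact fun t ht => le_of_lt ht.2
    rw [this, Real.volume_Ioo, hc1]
    norm_num

/-- A stochastic order comparison gives pointwise comparison of cdfs. -/
lemma cdf_le_of_stOrder_s7 (hμ : IsProbabilityMeasure μ) (hν : IsProbabilityMeasure ν)
    (h : StOrder μ ν) : ∀ x, cdf ν x ≤ cdf μ x := by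
  intro x
  have key : ∀ δ : ℝ, 0 < δ → cdf ν x ≤ cdf μ (x + δ) := by
    intro δ hδ
    set f : ℝ → ℝ := fun y => min 1 (max ((y - x) / δ) 0) with hf
    have hf01 : ∀ y, 0 ≤ f y ∧ f y ≤ 1 := fun y =>
      ⟨le_min one_pos.le (le_max_right _ _), min_le_left _ _⟩
    have hfmono : Monotone f := fun a b hab => by
      apply min_le_min le_rfl
      apply max_le_max _ le_rfl
      gcongr
    have hfbdd : ∃ C : ℝ, ∀ y, |f y| ≤ C :=
      ⟨1, fun y => abs_le.2 ⟨by linarith [(hf01 y).1], (hf01 y).2⟩⟩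
    have hint := h f hfmono hfbdd
    have hfcont : Continuous f := by
      apply continuous_const.min
      exact (continuous_id.sub continuous_const).div_const _ |>.max continuous_const
    have hfint : ∀ (ρ : Measure ℝ), IsProbabilityMeasure ρ → Integrable f ρ := by
      intro ρ hρ
      refine Integrable.mono' (integrable_const 1) hfcont.aestronglyMeasurable ?_
      exact Eventually.of_forall fun y => abs_le.2 ⟨by linarith [(hf01 y).1], (hf01 y).2⟩
    -- lower bound for ∫ f dμ
    have hlow : (μ (Ioi (x + δ))).toReal ≤ ∫ y, f y ∂μ := by
      rw [← measureReal_def, ← integral_indicator_one measurableSet_Ioi]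
      apply integral_mono (by
        exact (integrable_indicator_iff measurableSet_Ioi).2
          (integrable_const (1:ℝ)).integrableOn) (hfint μ hμ)
      intro y
      by_cases hy : y ∈ Ioi (x + δ)
      · simp only [indicator_of_mem hy, Pi.one_apply]
        simp only [hf]
        rw [min_eq_left]
        exact le_max_of_le_left ((one_le_div hδ).2 (by simp at hy; linarith))
      · simp only [indicator_of_notMem hy]
        exact (hf01 y).1
    -- upper bound for ∫ f dν
    have hup : ∫ y, f y ∂ν ≤ (ν (Ioi x)).toReal := by
      rw [← measureReal_def, ← integral_indicator_one measurableSet_Ioi]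
      apply integral_mono (hfint ν hν) (by
        exact (integrable_indicator_iff measurableSet_Ioi).2
          (integrable_const (1:ℝ)).integrableOn)
      intro y
      by_cases hy : y ∈ Ioi x
      · simp only [indicator_of_mem hy, Pi.one_apply]
        exact (hf01 y).2
      · simp only [indicator_of_notMem hy, hf]
        have hyx : y ≤ x := by simpa using hy
        have hnp : (y - x) / δ ≤ 0 := div_nonpos_of_nonpos_of_nonneg (by linarith) hδ.le
        rw [max_eq_right hnp, min_eq_right zero_le_one]
    have hIoiμ : (μ (Ioi (x + δ))).toReal = 1 - cdf μ (x + δ) := by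
      rw [cdf_eq_real, measureReal_def]
      have := measure_compl (s := Iic (x+δ)) measurableSet_Iic (measure_ne_top μ _)
      rw [compl_Iic] at this
      rw [this, measure_univ]
      rw [ENNReal.toReal_sub_of_le (by exact prob_le_one) (by simp)]
      simp
    have hIoiν : (ν (Ioi x)).toReal = 1 - cdf ν x := by
      rw [cdf_eq_real, measureReal_def]
      have := measure_compl (s := Iic x) measurableSet_Iic (measure_ne_top ν _)
      rw [compl_Iic] at this
      rw [this, measure_univ]
      rw [ENNReal.toReal_sub_of_le (by exact prob_le_one) (by simp)]
      simp
    have := le_trans hlow (le_trans hint hup)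
    rw [hIoiμ, hIoiν] at this
    linarith
  -- pass to the limit δ → 0⁺ using right continuity
  have hrc : Tendsto (cdf μ) (nhdsWithin x (Ioi x)) (nhds (cdf μ x)) :=
    ((cdf μ).right_continuous x).mono_left (nhdsWithin_mono x Ioi_subset_Ici_self)
  refine ge_of_tendsto hrc ?_
  filter_upwards [self_mem_nhdsWithin] with y hy
  have := key (y - x) (by simpa using hy)
  simpa using this

lemma qf_le_qf_of_cdf_le (h : ∀ x, cdf ν x ≤ cdf μ x) : ∀ t, qf μ t ≤ qf ν t := by
  intro t
  by_cases ht : 0 < t ∧ t < 1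
  · have ht' : t ∈ Ioo (0:ℝ) 1 := ht
    rw [qf_eq ht', qf_eq ht']
    exact csInf_le_csInf (qf_set_bddBelow μ ht.1) (qf_set_nonempty ν ht.2)
      fun x hx => le_trans hx (h x)
  · simp [qf, ht]

lemma lintegral_sq_map_qf (hμ : IsProbabilityMeasure μ) :
    ∫⁻ t in Ioo (0:ℝ) 1, ENNReal.ofReal (qf μ t ^ 2) = ∫⁻ x, ENNReal.ofReal (x ^ 2) ∂μ := by
  conv_rhs => rw [← map_qf hμ]
  rw [lintegral_map (by measurability) (qf_measurable μ)]

lemma lintegral_sq_ne_top_of_integrable (hint : Integrable (fun x : ℝ => x ^ 2) μ) :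
    ∫⁻ x, ENNReal.ofReal (x ^ 2) ∂μ ≠ ⊤ := by
  have := hint.hasFiniteIntegral
  rw [HasFiniteIntegral] at this
  refine ne_of_lt (lt_of_eq_of_lt ?_ this)
  congr 1
  ext x
  rw [← Real.enorm_eq_ofReal (sq_nonneg x)]

lemma integrable_sq_of_lintegral_ne_top {ρ : Measure ℝ}
    (h : ∫⁻ x, ENNReal.ofReal (x ^ 2) ∂ρ ≠ ⊤) : Integrable (fun x : ℝ => x ^ 2) ρ := by
  refine ⟨(continuous_pow 2).aestronglyMeasurable, ?_⟩
  rw [HasFiniteIntegral]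
  refine lt_of_eq_of_lt ?_ h.lt_top
  congr 1
  ext x
  rw [← Real.enorm_eq_ofReal (sq_nonneg x)]


/-- Helly-type selection: a sequence of monotone functions on `(0,1)` sandwiched between two
fixed functions admits a subsequence converging a.e. on `(0,1)`. -/
lemma exists_subseq_ae_tendsto (l u : Measure ℝ) (Q : ℕ → ℝ → ℝ)
    (hbound : ∀ n t, t ∈ Ioo (0:ℝ) 1 → qf l t ≤ Q n t ∧ Q n t ≤ qf u t)
    (hmono : ∀ n, MonotoneOn (Q n) (Ioo (0:ℝ) 1)) :
    ∃ φ : ℕ → ℕ, StrictMono φ ∧ ∀ᵐ t ∂(volume.restrict (Ioo (0:ℝ) 1)),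
      ∃ c, Tendsto (fun n => Q (φ n) t) atTop (nhds c) := by
  classical
  set T := {q : ℚ // 0 < (q:ℝ) ∧ (q:ℝ) < 1} with hT
  have hTmem : ∀ q : T, (q.1:ℝ) ∈ Ioo (0:ℝ) 1 := fun q => ⟨q.2.1, q.2.2⟩
  -- the product of compact intervals is sequentially compact
  set S : Set (T → ℝ) := univ.pi (fun q => Icc (qf l q.1) (qf u q.1)) with hS
  have hScomp : IsCompact S := isCompact_univ_pi fun q => isCompact_Icc
  have hseq : IsSeqCompact S := hScomp.isSeqCompact
  have hxmem : ∀ n, (fun q : T => Q n (q.1:ℝ)) ∈ S := by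
    intro n
    rw [hS, mem_univ_pi]
    intro q
    exact ⟨(hbound n _ (hTmem q)).1, (hbound n _ (hTmem q)).2⟩
  obtain ⟨L, hLS, φ, hφ, hconv⟩ := hseq hxmem
  have hconv' : ∀ q : T, Tendsto (fun n => Q (φ n) (q.1:ℝ)) atTop (nhds (L q)) := by
    intro q
    exact (tendsto_pi_nhds.1 hconv) q
  refine ⟨φ, hφ, ?_⟩
  -- L is monotone along rationals
  have hLmono : ∀ q r : T, (q.1:ℝ) ≤ (r.1:ℝ) → L q ≤ L r := by
    intro q r hqr
    exact le_of_tendsto_of_tendsto' (hconv' q) (hconv' r)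
      (fun n => hmono (φ n) (hTmem q) (hTmem r) hqr)
  -- lower/upper limit functions
  set G : ℝ → ℝ := fun t => sSup (L '' {q : T | (q.1:ℝ) < t}) with hG
  set J : ℝ → ℝ := fun t => sInf (L '' {q : T | t < (q.1:ℝ)}) with hJ
  have himL_ne : ∀ t ∈ Ioo (0:ℝ) 1, (L '' {q : T | (q.1:ℝ) < t}).Nonempty := by
    rintro t ⟨ht0, ht1⟩
    obtain ⟨q, hq0, hqt⟩ := exists_rat_btwn ht0
    exact ⟨L ⟨q, hq0, hqt.trans ht1⟩, ⟨⟨q, hq0, hqt.trans ht1⟩, hqt, rfl⟩⟩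
  have himU_ne : ∀ t ∈ Ioo (0:ℝ) 1, (L '' {q : T | t < (q.1:ℝ)}).Nonempty := by
    rintro t ⟨ht0, ht1⟩
    obtain ⟨q, hqt, hq1⟩ := exists_rat_btwn ht1
    exact ⟨L ⟨q, ht0.trans hqt, hq1⟩, ⟨⟨q, ht0.trans hqt, hq1⟩, hqt, rfl⟩⟩
  have himL_bdd : ∀ t ∈ Ioo (0:ℝ) 1, BddAbove (L '' {q : T | (q.1:ℝ) < t}) := by
    intro t ht
    refine ⟨qf u t, ?_⟩
    rintro y ⟨q, hq, rfl⟩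
    have h1 : L q ≤ qf u q.1 := (hLS q (mem_univ q)).2
    exact h1.trans (qf_monotoneOn (μ := u) (hTmem q) ht (le_of_lt hq))
  have himU_bdd : ∀ t ∈ Ioo (0:ℝ) 1, BddBelow (L '' {q : T | t < (q.1:ℝ)}) := by
    intro t ht
    refine ⟨qf l t, ?_⟩
    rintro y ⟨q, hq, rfl⟩
    have h1 : qf l q.1 ≤ L q := (hLS q (mem_univ q)).1
    exact (qf_monotoneOn (μ := l) ht (hTmem q) (le_of_lt hq)).trans h1
  have hGJ : ∀ t ∈ Ioo (0:ℝ) 1, G t ≤ J t := by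
    intro t ht
    refine le_csInf (himU_ne t ht) ?_
    rintro y ⟨r, hr, rfl⟩
    refine csSup_le (himL_ne t ht) ?_
    rintro z ⟨q, hq, rfl⟩
    exact hLmono q r (le_of_lt (hq.trans hr))
  -- the set of "jump points" is countable
  set D : Set ℝ := {t | t ∈ Ioo (0:ℝ) 1 ∧ G t < J t} with hD
  have hDcount : D.Countable := by
    have hpick : ∀ t : D, ∃ q : ℚ, G t.1 < (q:ℝ) ∧ (q:ℝ) < J t.1 :=
      fun t => exists_rat_btwn t.2.2
    choose F hF1 hF2 using hpick
    have hFinj : Function.Injective F := by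
      intro s t hst
      by_contra hne
      have hne' : s.1 ≠ t.1 := fun h => hne (Subtype.ext h)
      -- wlog s < t
      rcases lt_or_gt_of_ne hne' with hlt | hlt
      · obtain ⟨q, hq1, hq2⟩ := exists_rat_btwn hlt
        have hqT : (0:ℝ) < q ∧ (q:ℝ) < 1 := ⟨s.2.1.1.trans hq1, hq2.trans t.2.1.2⟩
        have h1 : J s.1 ≤ L ⟨q, hqT⟩ :=
          csInf_le (himU_bdd s.1 s.2.1) ⟨⟨q, hqT⟩, hq1, rfl⟩
        have h2 : L ⟨q, hqT⟩ ≤ G t.1 :=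
          le_csSup (himL_bdd t.1 t.2.1) ⟨⟨q, hqT⟩, hq2, rfl⟩
        have : (F s : ℝ) < (F t : ℝ) := lt_of_lt_of_le (hF2 s) (le_trans h1 (le_trans h2 (hF1 t).le))
        rw [hst] at this
        exact lt_irrefl _ this
      · obtain ⟨q, hq1, hq2⟩ := exists_rat_btwn hlt
        have hqT : (0:ℝ) < q ∧ (q:ℝ) < 1 := ⟨t.2.1.1.trans hq1, hq2.trans s.2.1.2⟩
        have h1 : J t.1 ≤ L ⟨q, hqT⟩ :=
          csInf_le (himU_bdd t.1 t.2.1) ⟨⟨q, hqT⟩, hq1, rfl⟩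
        have h2 : L ⟨q, hqT⟩ ≤ G s.1 :=
          le_csSup (himL_bdd s.1 s.2.1) ⟨⟨q, hqT⟩, hq2, rfl⟩
        have : (F t : ℝ) < (F s : ℝ) := lt_of_lt_of_le (hF2 t) (le_trans h1 (le_trans h2 (hF1 s).le))
        rw [hst] at this
        exact lt_irrefl _ this
    rw [← Set.countable_coe_iff]
    exact Function.Injective.countable hFinj
  -- convergence off the jump set
  have hconvoff : ∀ t ∈ Ioo (0:ℝ) 1, t ∉ D →
      Tendsto (fun n => Q (φ n) t) atTop (nhds (G t)) := by
    intro t ht htD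
    have hGJt : G t = J t := by
      rcases eq_or_lt_of_le (hGJ t ht) with h | h
      · exact h
      · exact absurd ⟨ht, h⟩ htD
    rw [tendsto_order]
    constructor
    · intro a ha
      obtain ⟨y, ⟨q, hq, rfl⟩, hy⟩ := exists_lt_of_lt_csSup (himL_ne t ht) ha
      filter_upwards [(hconv' q).eventually (eventually_gt_nhds hy)] with n hn
      exact lt_of_lt_of_le hn (hmono (φ n) (hTmem q) ht hq.le)
    · intro b hb
      rw [hGJt] at hb
      obtain ⟨y, ⟨q, hq, rfl⟩, hy⟩ := exists_lt_of_csInf_lt (himU_ne t ht) hb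
      filter_upwards [(hconv' q).eventually (eventually_lt_nhds hy)] with n hn
      exact lt_of_le_of_lt (hmono (φ n) ht (hTmem q) hq.le) hn
  have hae : ∀ᵐ t ∂(volume.restrict (Ioo (0:ℝ) 1)), t ∉ D := by
    refine ae_restrict_of_ae ?_
    exact measure_eq_zero_iff_ae_notMem.1 (hDcount.measure_zero volume)
  filter_upwards [hae, ae_restrict_mem measurableSet_Ioo] with t htD htI
  exact ⟨G t, hconvoff t htI htD⟩

/-- An order bounded subset of `𝒫₂(ℝ)` is tight and 2-uniformly
integrable, hence relatively compact in the 2-Wasserstein space. -/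
theorem order_bounded_implies_relatively_compact (M : Set (Measure ℝ)) (hM : M ⊆ P2)
    (hob : ∃ l ∈ P2, ∃ u ∈ P2, ∀ μ ∈ M, StOrder l μ ∧ StOrder μ u) :
    -- tightness
    (∀ ε : ℝ≥0∞, 0 < ε → ∃ N : ℝ, ∀ μ ∈ M, μ {x : ℝ | N ≤ |x|} ≤ ε) ∧
    -- 2-uniform integrability
    Tendsto (fun N : ℝ => ⨆ μ ∈ M, ∫⁻ x in {x : ℝ | N ≤ |x|}, ENNReal.ofReal (x ^ 2) ∂μ)
      atTop (nhds 0) ∧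
    -- relative compactness in (𝒫₂(ℝ), 𝒲₂)
    (∀ ρ : ℕ → Measure ℝ, (∀ n, ρ n ∈ M) →
      ∃ (φ : ℕ → ℕ) (ν : Measure ℝ), StrictMono φ ∧ ν ∈ P2 ∧
        W2Tendsto (fun n => ρ (φ n)) ν) := by
  classical
  obtain ⟨l, hl, u, hu, hlu⟩ := hob
  have hlprob : IsProbabilityMeasure l := hl.1
  have huprob : IsProbabilityMeasure u := hu.1
  have hprob : ∀ μ ∈ M, IsProbabilityMeasure μ := fun μ hμ => (hM hμ).1
  -- sandwich of quantile functions
  have hsand : ∀ μ ∈ M, ∀ t, qf l t ≤ qf μ t ∧ qf μ t ≤ qf u t := by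
    intro μ hμ t
    constructor
    · exact qf_le_qf_of_cdf_le
        (cdf_le_of_stOrder_s7 hlprob (hprob μ hμ) (hlu μ hμ).1) t
    · exact qf_le_qf_of_cdf_le
        (cdf_le_of_stOrder_s7 (hprob μ hμ) huprob (hlu μ hμ).2) t
  set g : ℝ → ℝ := fun t => max |qf l t| |qf u t| with hg
  have hgmeas : Measurable g := ((qf_measurable l).abs.max (qf_measurable u).abs)
  have habs : ∀ μ ∈ M, ∀ t, |qf μ t| ≤ g t := by
    intro μ hμ t
    rw [abs_le]
    constructor
    · calc -g t ≤ -|qf l t| := neg_le_neg (le_max_left _ _)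
        _ ≤ qf l t := neg_abs_le _
        _ ≤ qf μ t := (hsand μ hμ t).1
    · calc qf μ t ≤ qf u t := (hsand μ hμ t).2
        _ ≤ |qf u t| := le_abs_self _
        _ ≤ g t := le_max_right _ _
  set A : ℝ → Set ℝ := fun N => {t | N ≤ g t} with hA
  have hAmeas : ∀ N, MeasurableSet (A N) := fun N => measurableSet_le measurable_const hgmeas
  have hAanti : Antitone A := fun N N' h t ht => le_trans h ht
  have hAempty : ⋂ (n : ℕ), A (n : ℝ) = ∅ := by
    ext t
    simp only [mem_iInter, mem_empty_iff_false, iff_false, not_forall, hA, mem_setOf_eq, not_le]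
    obtain ⟨n, hn⟩ := exists_nat_gt (g t)
    exact ⟨n, hn⟩
  have hμtail : ∀ N : ℝ, ∀ μ ∈ M, μ {x : ℝ | N ≤ |x|} ≤
      (volume.restrict (Ioo (0:ℝ) 1)) (A N) := by
    intro N μ hμ
    have hSmeas : MeasurableSet {x : ℝ | N ≤ |x|} :=
      measurableSet_le measurable_const continuous_abs.measurable
    rw [← map_qf (hprob μ hμ), Measure.map_apply (qf_measurable μ) hSmeas]
    apply measure_mono
    intro t ht
    exact le_trans ht (habs μ hμ t)
  -- Part 1: tightness
  have part1 : ∀ ε : ℝ≥0∞, 0 < ε → ∃ N : ℝ, ∀ μ ∈ M, μ {x : ℝ | N ≤ |x|} ≤ ε := by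
    intro ε hε
    have htend : Tendsto (fun n : ℕ => (volume.restrict (Ioo (0:ℝ) 1)) (A (n : ℝ)))
        atTop (nhds 0) := by
      have := tendsto_measure_iInter_atTop (μ := volume.restrict (Ioo (0:ℝ) 1))
        (s := fun n : ℕ => A (n : ℝ)) (fun n => (hAmeas _).nullMeasurableSet)
        (fun n m h => hAanti (by exact_mod_cast h)) ⟨0, measure_ne_top _ _⟩
      rwa [hAempty, measure_empty] at this
    obtain ⟨n, hn⟩ := (ENNReal.tendsto_nhds_zero.1 htend ε hε).exists
    exact ⟨n, fun μ hμ => le_trans (hμtail n μ hμ) hn⟩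
  -- finiteness of the dominating second moment
  have hgfin : ∫⁻ t in Ioo (0:ℝ) 1, ENNReal.ofReal (g t ^ 2) ≠ ⊤ := by
    have hpt : ∀ t, ENNReal.ofReal (g t ^ 2) ≤
        ENNReal.ofReal (qf l t ^ 2) + ENNReal.ofReal (qf u t ^ 2) := by
      intro t
      refine le_trans (ENNReal.ofReal_le_ofReal ?_) (ENNReal.ofReal_add_le)
      have hgle : g t = |qf l t| ∨ g t = |qf u t| := max_choice _ _
      rcases hgle with h1 | h1 <;>
        · rw [h1, sq_abs]; nlinarith [sq_nonneg (qf l t), sq_nonneg (qf u t)]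
    refine ne_of_lt (lt_of_le_of_lt (lintegral_mono hpt) ?_)
    rw [lintegral_add_left (((qf_measurable l).pow_const 2).ennreal_ofReal)]
    rw [lintegral_sq_map_qf hlprob, lintegral_sq_map_qf huprob]
    exact ENNReal.add_lt_top.2 ⟨(lintegral_sq_ne_top_of_integrable hl.2).lt_top,
      (lintegral_sq_ne_top_of_integrable hu.2).lt_top⟩
  set μ2 : Measure ℝ := (volume.restrict (Ioo (0:ℝ) 1)).withDensity
    (fun t => ENNReal.ofReal (g t ^ 2)) with hμ2
  have hμ2fin : μ2 univ ≠ ⊤ := by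
    rw [hμ2, withDensity_apply _ MeasurableSet.univ, Measure.restrict_univ]
    exact hgfin
  have hkey : ∀ N : ℝ, ∀ μ ∈ M,
      ∫⁻ x in {x : ℝ | N ≤ |x|}, ENNReal.ofReal (x ^ 2) ∂μ ≤ μ2 (A N) := by
    intro N μ hμ
    have hSmeas : MeasurableSet {x : ℝ | N ≤ |x|} :=
      measurableSet_le measurable_const continuous_abs.measurable
    rw [← map_qf (hprob μ hμ),
      setLIntegral_map hSmeas (show Measurable fun x : ℝ => ENNReal.ofReal (x ^ 2) from (measurable_id.pow_const 2).ennreal_ofReal) (qf_measurable μ)]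
    rw [hμ2, withDensity_apply _ (hAmeas N)]
    have hptw : ∀ t, ENNReal.ofReal (qf μ t ^ 2) ≤ ENNReal.ofReal (g t ^ 2) := by
      intro t
      apply ENNReal.ofReal_le_ofReal
      have h := abs_le.1 (habs μ hμ t)
      exact sq_le_sq' h.1 h.2
    refine le_trans (lintegral_mono hptw) ?_
    apply lintegral_mono_set
    intro t ht
    exact le_trans ht (habs μ hμ t)
  -- Part 2: uniform integrability
  have part2 : Tendsto (fun N : ℝ => ⨆ μ ∈ M,
      ∫⁻ x in {x : ℝ | N ≤ |x|}, ENNReal.ofReal (x ^ 2) ∂μ) atTop (nhds 0) := by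
    rw [ENNReal.tendsto_nhds_zero]
    intro ε hε
    have htend : Tendsto (fun n : ℕ => μ2 (A (n : ℝ))) atTop (nhds 0) := by
      have := tendsto_measure_iInter_atTop (μ := μ2)
        (s := fun n : ℕ => A (n : ℝ)) (fun n => (hAmeas _).nullMeasurableSet)
        (fun n m h => hAanti (by exact_mod_cast h))
        ⟨0, ne_top_of_le_ne_top hμ2fin (measure_mono (subset_univ _))⟩
      rwa [hAempty, measure_empty] at this
    obtain ⟨n, hn⟩ := (ENNReal.tendsto_nhds_zero.1 htend ε hε).exists
    filter_upwards [eventually_ge_atTop (n : ℝ)] with N hN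
    refine iSup₂_le fun μ hμ => le_trans (hkey N μ hμ) (le_trans ?_ hn)
    exact measure_mono (hAanti hN)
  refine ⟨part1, part2, ?_⟩
  -- Part 3: relative compactness
  intro ρ hρ
  obtain ⟨φ, hφ, hae⟩ := exists_subseq_ae_tendsto l u (fun n => qf (ρ n))
    (fun n t ht => hsand (ρ n) (hρ n) t) (fun n => qf_monotoneOn)
  obtain ⟨Qlim, hQm, hQtend⟩ := measurable_limit_of_tendsto_metrizable_ae
    (f := fun n => qf (ρ (φ n))) (μ := volume.restrict (Ioo (0:ℝ) 1))
    (fun n => (qf_measurable _).aemeasurable) hae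
  set ν : Measure ℝ := Measure.map Qlim (volume.restrict (Ioo (0:ℝ) 1)) with hν
  have hνprob : IsProbabilityMeasure ν := Measure.isProbabilityMeasure_map hQm.aemeasurable
  have hQlim_bdd : ∀ᵐ t ∂(volume.restrict (Ioo (0:ℝ) 1)), |Qlim t| ≤ g t := by
    filter_upwards [hQtend] with t ht
    exact le_of_tendsto ht.abs (Eventually.of_forall fun n => habs _ (hρ (φ n)) t)
  have hνP2 : ν ∈ P2 := by
    refine ⟨hνprob, integrable_sq_of_lintegral_ne_top ?_⟩
    rw [hν, lintegral_map (show Measurable fun x : ℝ => ENNReal.ofReal (x ^ 2) from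
      (measurable_id.pow_const 2).ennreal_ofReal) hQm]
    refine ne_top_of_le_ne_top hgfin (lintegral_mono_ae ?_)
    filter_upwards [hQlim_bdd] with t ht
    apply ENNReal.ofReal_le_ofReal
    have h := abs_le.1 ht
    exact sq_le_sq' h.1 h.2
  refine ⟨φ, ν, hφ, hνP2, ?_⟩
  -- convergence in W2
  set I : ℕ → ℝ≥0∞ := fun n =>
    ∫⁻ t in Ioo (0:ℝ) 1, ENNReal.ofReal ((qf (ρ (φ n)) t - Qlim t) ^ 2) with hI
  have hrpow2 : ∀ a : ℝ, |a| ^ (2:ℝ) = a ^ 2 := by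
    intro a
    rw [show (2:ℝ) = ((2:ℕ):ℝ) by norm_num, Real.rpow_natCast, sq_abs]
  have hW2le : ∀ n, W2 (ρ (φ n)) ν ≤ I n ^ (1/2 : ℝ) := by
    intro n
    set π : Measure (ℝ × ℝ) :=
      Measure.map (fun t => (qf (ρ (φ n)) t, Qlim t)) (volume.restrict (Ioo (0:ℝ) 1)) with hπ
    have hpair : Measurable fun t => (qf (ρ (φ n)) t, Qlim t) :=
      (qf_measurable _).prodMk hQm
    have h1 : π.map Prod.fst = ρ (φ n) := by
      rw [hπ, Measure.map_map measurable_fst hpair]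
      exact map_qf (hprob _ (hρ (φ n)))
    have h2 : π.map Prod.snd = ν := by
      rw [hπ, Measure.map_map measurable_snd hpair, hν]
      rfl
    have hval : (∫⁻ q, ENNReal.ofReal (|q.1 - q.2| ^ (2:ℝ)) ∂π) = I n := by
      rw [hπ, lintegral_map ?_ hpair]
      · simp only [hrpow2]; rfl
      · simp only [hrpow2]
        exact ((measurable_fst.sub measurable_snd).pow_const 2).ennreal_ofReal
    calc W2 (ρ (φ n)) ν ≤ (∫⁻ q, ENNReal.ofReal (|q.1 - q.2| ^ (2:ℝ)) ∂π) ^ (1/(2:ℝ)) := by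
          refine le_trans (iInf_le _ π) ?_
          rw [iInf_pos h1, iInf_pos h2]
      _ = I n ^ (1/2 : ℝ) := by rw [hval]
  have hI0 : Tendsto I atTop (nhds 0) := by
    have hdom := tendsto_lintegral_of_dominated_convergence
      (μ := volume.restrict (Ioo (0:ℝ) 1))
      (F := fun n t => ENNReal.ofReal ((qf (ρ (φ n)) t - Qlim t) ^ 2))
      (f := fun _ => 0)
      (bound := fun t => ENNReal.ofReal (4 * g t ^ 2))
      (fun n => (((qf_measurable _).sub hQm).pow_const 2).ennreal_ofReal)
      ?_ ?_ ?_
    · simpa using hdom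
    · intro n
      filter_upwards [hQlim_bdd] with t ht
      apply ENNReal.ofReal_le_ofReal
      have h1 := abs_le.1 (habs _ (hρ (φ n)) t)
      have h2 := abs_le.1 ht
      nlinarith
    · have : ∀ t : ℝ, ENNReal.ofReal (4 * g t ^ 2) =
          ENNReal.ofReal 4 * ENNReal.ofReal (g t ^ 2) := fun t =>
        ENNReal.ofReal_mul (by norm_num)
      simp only [this]
      rw [lintegral_const_mul _ ((hgmeas.pow_const 2).ennreal_ofReal)]
      exact ENNReal.mul_ne_top (by simp) hgfin
    · filter_upwards [hQtend] with t ht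
      have : Tendsto (fun n => (qf (ρ (φ n)) t - Qlim t) ^ 2) atTop (nhds 0) := by
        have h0 : Tendsto (fun n => qf (ρ (φ n)) t - Qlim t) atTop (nhds (Qlim t - Qlim t)) :=
          ht.sub tendsto_const_nhds
        rw [sub_self] at h0
        have := h0.pow 2
        simpa using this
      have := (ENNReal.continuous_ofReal.tendsto 0).comp this
      simpa [Function.comp_def] using this
  have hroot : Tendsto (fun n => I n ^ (1/2 : ℝ)) atTop (nhds 0) := by
    have hc : Continuous fun x : ℝ≥0∞ => x ^ (1/2 : ℝ) := ENNReal.continuous_rpow_const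
    have := (hc.tendsto 0).comp hI0
    simpa [ENNReal.zero_rpow_of_pos, Function.comp_def] using this
  rw [W2Tendsto]
  exact tendsto_of_tendsto_of_tendsto_of_le_of_le tendsto_const_nhds hroot
    (fun n => zero_le) hW2le
end
end

section
/- For probability measures on ℝ, if μ has finite first moment and ν has finite first moment, then μ ≤_st ν (tested against all bounded increasing functions) if and only if ∫ f dμ ≤ ∫ f dν for all 1-Lipschitz increasing functions f : ℝ → ℝ. -/
open MeasureTheory Filter Set ENNReal

noncomputable section

lemma lip_shift (c : ℝ) : LipschitzWith 1 (fun x : ℝ => x + c) :=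
  LipschitzWith.of_dist_le_mul fun x y => by
    simp [Real.dist_eq, one_mul]

/-- From the Lipschitz test, compare measures of sets approximated by scaled ramps. -/
lemma meas_le_of_ramps (μ ν : Measure ℝ)
    [IsProbabilityMeasure μ] [IsProbabilityMeasure ν]
    (hyp : ∀ f : ℝ → ℝ, Monotone f → LipschitzWith 1 f →
      ∫ x, f x ∂μ ≤ ∫ x, f x ∂ν)
    (S : Set ℝ) (hSm : MeasurableSet S) (g : ℕ → ℝ → ℝ)
    (hmono : ∀ n, Monotone (g n)) (hlip : ∀ n, LipschitzWith 1 (g n))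
    (hbd : ∀ (n : ℕ) (x : ℝ), ((n : ℝ) + 1) * g n x ∈ Icc (0 : ℝ) 1)
    (hlim : ∀ x : ℝ, Tendsto (fun n : ℕ => ((n : ℝ) + 1) * g n x) atTop
      (nhds (S.indicator 1 x))) :
    μ S ≤ ν S := by
  have key : ∀ n : ℕ, ∫ x, ((n : ℝ) + 1) * g n x ∂μ ≤ ∫ x, ((n : ℝ) + 1) * g n x ∂ν := by
    intro n
    rw [integral_const_mul, integral_const_mul]
    have hn : (0 : ℝ) ≤ (n : ℝ) + 1 := by positivity
    exact mul_le_mul_of_nonneg_left (hyp (g n) (hmono n) (hlip n)) hn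
  -- dominated convergence on both sides
  have hint : ∀ (m : Measure ℝ) [IsProbabilityMeasure m],
      Tendsto (fun n : ℕ => ∫ x, ((n : ℝ) + 1) * g n x ∂m) atTop
        (nhds (∫ x, S.indicator (1 : ℝ → ℝ) x ∂m)) := by
    intro m _
    apply tendsto_integral_of_dominated_convergence (fun _ => (1 : ℝ))
    · intro n
      exact (((hlip n).continuous.measurable).const_mul _).aestronglyMeasurable
    · exact integrable_const _
    · intro n
      refine ae_of_all _ fun x => ?_
      have := hbd n x
      rw [Real.norm_eq_abs, abs_of_nonneg this.1]
      exact this.2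
    · exact ae_of_all _ fun x => hlim x
  have h1 := (hint μ)
  have h2 := (hint ν)
  have hle : ∫ x, S.indicator (1 : ℝ → ℝ) x ∂μ ≤ ∫ x, S.indicator (1 : ℝ → ℝ) x ∂ν :=
    le_of_tendsto_of_tendsto' h1 h2 key
  rw [integral_indicator_one hSm, integral_indicator_one hSm] at hle
  exact (ENNReal.toReal_le_toReal (measure_ne_top μ S) (measure_ne_top ν S)).mp hle

lemma meas_Ioi_le (μ ν : Measure ℝ)
    [IsProbabilityMeasure μ] [IsProbabilityMeasure ν]
    (hyp : ∀ f : ℝ → ℝ, Monotone f → LipschitzWith 1 f →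
      ∫ x, f x ∂μ ≤ ∫ x, f x ∂ν) (a : ℝ) :
    μ (Ioi a) ≤ ν (Ioi a) := by
  apply meas_le_of_ramps μ ν hyp _ measurableSet_Ioi
    (fun n x => max 0 (min (1 / ((n : ℝ) + 1)) (x - a)))
  · intro n x y hxy
    exact max_le_max le_rfl (min_le_min le_rfl (by linarith))
  · intro n
    have : LipschitzWith 1 (fun x : ℝ => x - a) := by
      simpa [sub_eq_add_neg] using lip_shift (-a)
    exact (this.const_min _).const_max _
  · intro n x
    have hn : (0 : ℝ) < (n : ℝ) + 1 := by positivity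
    constructor
    · positivity
    · rcases le_or_gt (x - a) (1 / ((n : ℝ) + 1)) with h | h
      · rcases le_or_gt (x - a) 0 with h0 | h0
        · rw [min_eq_right h, max_eq_left h0]; simp
        · rw [min_eq_right h, max_eq_right h0.le]
          calc ((n : ℝ) + 1) * (x - a) ≤ ((n : ℝ) + 1) * (1 / ((n : ℝ) + 1)) :=
                mul_le_mul_of_nonneg_left h hn.le
            _ = 1 := by field_simp
      · rw [min_eq_left h.le, max_eq_right (by positivity)]
        rw [mul_one_div, div_self hn.ne']
  · intro x
    rcases lt_or_ge a x with hx | hx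
    · have : ∀ᶠ n : ℕ in atTop, ((n : ℝ) + 1) * max 0 (min (1 / ((n : ℝ) + 1)) (x - a)) = 1 := by
        have h1 : Tendsto (fun n : ℕ => 1 / ((n : ℝ) + 1)) atTop (nhds 0) :=
          tendsto_one_div_add_atTop_nhds_zero_nat
        filter_upwards [(tendsto_order.mp h1).2 (x - a) (by linarith)] with n hn
        have hnp : (0 : ℝ) < (n : ℝ) + 1 := by positivity
        rw [min_eq_left hn.le, max_eq_right (by positivity), mul_one_div, div_self hnp.ne']
      rw [indicator_of_mem (show x ∈ Ioi a from hx)]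
      exact Tendsto.congr' (this.mono fun n h => h.symm) tendsto_const_nhds
    · have : ∀ n : ℕ, ((n : ℝ) + 1) * max 0 (min (1 / ((n : ℝ) + 1)) (x - a)) = 0 := by
        intro n
        have hx0 : x - a ≤ 0 := by linarith
        rw [min_eq_right (le_trans hx0 (by positivity)), max_eq_left hx0, mul_zero]
      rw [indicator_of_notMem (show x ∉ Ioi a by simpa using hx)]
      exact Tendsto.congr (fun n => (this n).symm) tendsto_const_nhds

lemma meas_Ici_le_s10 (μ ν : Measure ℝ)
    [IsProbabilityMeasure μ] [IsProbabilityMeasure ν]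
    (hyp : ∀ f : ℝ → ℝ, Monotone f → LipschitzWith 1 f →
      ∫ x, f x ∂μ ≤ ∫ x, f x ∂ν) (a : ℝ) :
    μ (Ici a) ≤ ν (Ici a) := by
  apply meas_le_of_ramps μ ν hyp _ measurableSet_Ici
    (fun n x => max 0 (min (1 / ((n : ℝ) + 1)) (x - a + 1 / ((n : ℝ) + 1))))
  · intro n x y hxy
    exact max_le_max le_rfl (min_le_min le_rfl (by linarith))
  · intro n
    have : LipschitzWith 1 (fun x : ℝ => x - a + 1 / ((n : ℝ) + 1)) := by
      simpa [sub_eq_add_neg, add_assoc] using lip_shift (-a + 1 / ((n : ℝ) + 1))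
    exact (this.const_min _).const_max _
  · intro n x
    have hn : (0 : ℝ) < (n : ℝ) + 1 := by positivity
    set c := 1 / ((n : ℝ) + 1) with hc
    have hcp : 0 < c := by positivity
    constructor
    · positivity
    · rcases le_or_gt (x - a + c) c with h | h
      · rcases le_or_gt (x - a + c) 0 with h0 | h0
        · rw [min_eq_right h, max_eq_left h0]; simp
        · rw [min_eq_right h, max_eq_right h0.le]
          calc ((n : ℝ) + 1) * (x - a + c) ≤ ((n : ℝ) + 1) * c :=
                mul_le_mul_of_nonneg_left h hn.le
            _ = 1 := by rw [hc]; field_simp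
      · rw [min_eq_left h.le, max_eq_right hcp.le, hc, mul_one_div, div_self hn.ne']
  · intro x
    rcases le_or_gt a x with hx | hx
    · have : ∀ n : ℕ, ((n : ℝ) + 1) *
          max 0 (min (1 / ((n : ℝ) + 1)) (x - a + 1 / ((n : ℝ) + 1))) = 1 := by
        intro n
        have hn : (0 : ℝ) < (n : ℝ) + 1 := by positivity
        have hcp : (0 : ℝ) < 1 / ((n : ℝ) + 1) := by positivity
        rw [min_eq_left (by linarith), max_eq_right hcp.le, mul_one_div, div_self hn.ne']
      rw [indicator_of_mem (show x ∈ Ici a from hx)]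
      exact Tendsto.congr (fun n => (this n).symm) tendsto_const_nhds
    · have hev : ∀ᶠ n : ℕ in atTop, ((n : ℝ) + 1) *
          max 0 (min (1 / ((n : ℝ) + 1)) (x - a + 1 / ((n : ℝ) + 1))) = 0 := by
        have h1 : Tendsto (fun n : ℕ => 1 / ((n : ℝ) + 1)) atTop (nhds 0) :=
          tendsto_one_div_add_atTop_nhds_zero_nat
        filter_upwards [(tendsto_order.mp h1).2 (a - x) (by linarith)] with n hn
        have h0 : x - a + 1 / ((n : ℝ) + 1) ≤ 0 := by linarith
        rw [min_eq_right (le_trans h0 (by positivity)), max_eq_left h0, mul_zero]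
      rw [indicator_of_notMem (show x ∉ Ici a by simpa using not_le.mpr hx)]
      exact Tendsto.congr' (hev.mono fun n h => h.symm) tendsto_const_nhds

/-- Upper sets have comparable measure. -/
lemma meas_upperSet_le (μ ν : Measure ℝ)
    [IsProbabilityMeasure μ] [IsProbabilityMeasure ν]
    (hyp : ∀ f : ℝ → ℝ, Monotone f → LipschitzWith 1 f →
      ∫ x, f x ∂μ ≤ ∫ x, f x ∂ν)
    (S : Set ℝ) (hS : IsUpperSet S) : μ S ≤ ν S := by
  rcases eq_empty_or_nonempty S with rfl | hne
  · simp
  rcases em (BddBelow S) with hbd | hbd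
  · set a := sInf S with ha
    have hIoi : Ioi a ⊆ S := by
      intro x hx
      obtain ⟨s, hs, hsx⟩ := exists_lt_of_csInf_lt hne hx
      exact hS hsx.le hs
    have hIci : S ⊆ Ici a := fun x hx => csInf_le hbd hx
    by_cases haS : a ∈ S
    · have : S = Ici a := Subset.antisymm hIci (hS.Ici_subset haS)
      rw [this]; exact meas_Ici_le_s10 μ ν hyp a
    · have : S = Ioi a := by
        apply Subset.antisymm _ hIoi
        intro x hx
        rcases lt_or_eq_of_le (mem_Ici.mp (hIci hx)) with h | h
        · exact h
        · exact absurd (h ▸ hx) haS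
      rw [this]; exact meas_Ioi_le μ ν hyp a
  · have : S = univ := by
      apply eq_univ_of_forall
      intro x
      rcases not_bddBelow_iff.mp hbd x with ⟨s, hs, hsx⟩
      exact hS hsx.le hs
    rw [this]
    simp [measure_univ]

/-- For probability measures with finite first moments, the stochastic order
can equivalently be tested against 1-Lipschitz increasing functions. -/
theorem stochastic_order_iff_lipschitz_test (μ ν : Measure ℝ)
    [IsProbabilityMeasure μ] [IsProbabilityMeasure ν]
    (hμ : Integrable (fun x : ℝ => |x|) μ) (hν : Integrable (fun x : ℝ => |x|) ν) :
    StOrder μ ν ↔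
      ∀ f : ℝ → ℝ, Monotone f → LipschitzWith 1 f →
        ∫ x, f x ∂μ ≤ ∫ x, f x ∂ν := by
  constructor
  · -- forward: truncate
    intro hst f hf hlip
    set F : ℕ → ℝ → ℝ := fun n x => max (min (f x) n) (-(n : ℝ)) with hF
    have habs : ∀ x, |f x| ≤ |f 0| + |x| := by
      intro x
      calc |f x| ≤ |f x - f 0| + |f 0| := by
            have := abs_sub_abs_le_abs_sub (f x) (f 0); linarith [abs_sub_abs_le_abs_sub (f x) (f 0), abs_add_le (f x - f 0) (f 0)]
        _ ≤ |x - 0| + |f 0| := by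
            have := hlip.dist_le_mul x 0
            simp only [Real.dist_eq, NNReal.coe_one, one_mul] at this
            linarith
        _ = |f 0| + |x| := by rw [sub_zero]; ring
    have hFabs : ∀ n x, |F n x| ≤ |f x| := by
      intro n x
      have hn0 : (0:ℝ) ≤ (n : ℝ) := Nat.cast_nonneg n
      rw [abs_le]
      constructor
      · have h1 : -|f x| ≤ min (f x) (n : ℝ) :=
          le_min (neg_abs_le _) (by linarith [abs_nonneg (f x)])
        exact le_trans h1 (le_max_left _ _)
      · exact max_le (le_trans (min_le_left _ _) (le_abs_self _))
          (by linarith [abs_nonneg (f x)])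
    have hkey : ∀ n : ℕ, ∫ x, F n x ∂μ ≤ ∫ x, F n x ∂ν := by
      intro n
      apply hst (F n)
      · intro x y hxy
        exact max_le_max (min_le_min (hf hxy) le_rfl) le_rfl
      · exact ⟨(n : ℝ), fun x => by
          rw [abs_le]
          constructor
          · exact le_max_right _ _
          · exact max_le (min_le_right _ _)
              (by linarith [Nat.cast_nonneg (α := ℝ) n])⟩
    have hlim : ∀ x, Tendsto (fun n => F n x) atTop (nhds (f x)) := by
      intro x
      have : ∀ᶠ n : ℕ in atTop, F n x = f x := by
        filter_upwards [eventually_ge_atTop (Nat.ceil (|f x|))] with n hn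
        have h1 : |f x| ≤ (n : ℝ) := le_trans (Nat.le_ceil _) (by exact_mod_cast hn)
        rw [abs_le] at h1
        rw [hF]
        simp only
        rw [min_eq_left h1.2, max_eq_left (by linarith)]
      exact Tendsto.congr' (this.mono fun n h => h.symm) tendsto_const_nhds
    have hconv : ∀ (m : Measure ℝ) [IsProbabilityMeasure m],
        Integrable (fun x : ℝ => |x|) m →
        Tendsto (fun n => ∫ x, F n x ∂m) atTop (nhds (∫ x, f x ∂m)) := by
      intro m _ hm
      apply tendsto_integral_of_dominated_convergence (fun x => |f 0| + |x|)
      · intro n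
        exact ((hf.measurable.min measurable_const).max measurable_const).aestronglyMeasurable
      · exact (integrable_const _).add hm
      · intro n
        refine ae_of_all _ fun x => ?_
        rw [Real.norm_eq_abs]
        exact le_trans (hFabs n x) (habs x)
      · exact ae_of_all _ hlim
    exact le_of_tendsto_of_tendsto' (hconv μ hμ) (hconv ν hν) hkey
  · -- backward: layer cake
    intro hyp g hg ⟨C, hC⟩
    have hC0 : 0 ≤ C := le_trans (abs_nonneg _) (hC 0)
    set h : ℝ → ℝ := fun x => g x + C with hh
    have hh0 : ∀ x, 0 ≤ h x := fun x => by
      have := (abs_le.mp (hC x)).1; simp only [hh]; linarith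
    have hhbd : ∀ x, h x ≤ 2 * C := fun x => by
      have := (abs_le.mp (hC x)).2; simp only [hh]; linarith
    have hhm : Measurable h := (hg.measurable).add_const C
    have hint : ∀ (m : Measure ℝ) [IsProbabilityMeasure m], Integrable h m := by
      intro m _
      refine (integrable_const (2 * C)).mono' hhm.aestronglyMeasurable ?_
      refine ae_of_all _ fun x => ?_
      rw [Real.norm_eq_abs, abs_of_nonneg (hh0 x)]
      exact hhbd x
    have hgint : ∀ (m : Measure ℝ) [IsProbabilityMeasure m], Integrable g m := by
      intro m _
      have h2 := (hint m).sub (integrable_const C)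
      exact h2.congr (ae_of_all _ fun x => by simp [hh])
    -- lintegral comparison via layer cake
    have hlin : ∫⁻ x, ENNReal.ofReal (h x) ∂μ ≤ ∫⁻ x, ENNReal.ofReal (h x) ∂ν := by
      rw [lintegral_eq_lintegral_meas_lt μ (ae_of_all _ hh0) hhm.aemeasurable,
        lintegral_eq_lintegral_meas_lt ν (ae_of_all _ hh0) hhm.aemeasurable]
      apply lintegral_mono
      intro t
      apply meas_upperSet_le μ ν hyp
      intro x y hxy hx
      have hgy := hg hxy
      simp only [mem_setOf_eq, hh] at hx ⊢
      linarith
    have hμh : ∫ x, h x ∂μ ≤ ∫ x, h x ∂ν := by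
      rw [integral_eq_lintegral_of_nonneg_ae (ae_of_all _ hh0) hhm.aestronglyMeasurable,
        integral_eq_lintegral_of_nonneg_ae (ae_of_all _ hh0) hhm.aestronglyMeasurable]
      apply ENNReal.toReal_le_toReal ((hint μ).lintegral_lt_top.trans_le le_top).ne
        (hint ν).lintegral_lt_top.ne |>.mpr
      · exact hlin
    have e1 : ∫ x, h x ∂μ = ∫ x, g x ∂μ + C := by
      rw [hh]
      rw [integral_add (hgint μ) (integrable_const C), integral_const]
      simp
    have e2 : ∫ x, h x ∂ν = ∫ x, g x ∂ν + C := by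
      rw [hh]
      rw [integral_add (hgint ν) (integrable_const C), integral_const]
      simp
    rw [e1, e2] at hμh
    linarith
end
end
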